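/- The Möbius transformations A(z) = i(1−z)/(z+1) and B(z) = −z generate a subgroup of PSL_2(ℂ) isomorphic to the alternating group A_4. -/

import Mathlib

set_option linter.unreachableTactic false
set_option linter.unnecessarySeqFocus false
set_option linter.unusedTactic false
set_option maxHeartbeats 1000000

open Complex Matrix

namespace OrigamiA4Aux

instance decMemAlt : DecidablePred (· ∈ alternatingGroup (Fin 4)) :=
  fun σ => decidable_of_iff _ (Equiv.Perm.mem_alternatingGroup (f := σ)).symm

abbrev SL2 := Matrix.SpecialLinearGroup (Fin 2) ℂ
abbrev Q2 := SL2 ⧸ Subgroup.center SL2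
abbrev A4 := alternatingGroup (Fin 4)

noncomputable def mkQ : SL2 → Q2 := QuotientGroup.mk

noncomputable def c1 : SL2 := ⟨-(1 : Matrix (Fin 2) (Fin 2) ℂ), by simp [Matrix.det_neg]⟩

lemma c1_mem : c1 ∈ Subgroup.center SL2 := by
  rw [Matrix.SpecialLinearGroup.mem_center_iff]
  refine ⟨-1, by norm_num, ?_⟩
  ext i j
  fin_cases i <;> fin_cases j <;>
    simp [c1, Matrix.scalar_apply, Matrix.diagonal_apply, Matrix.one_apply]

lemma mk_eq_pos {x y : SL2} (h : x.1 = y.1) : mkQ x = mkQ y := congrArg mkQ (Subtype.ext h)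

lemma mk_eq_neg {x y : SL2} (h : x.1 = -y.1) : mkQ x = mkQ y := by
  have hx : x = c1 * y := Subtype.ext (by rw [Matrix.SpecialLinearGroup.coe_mul]; simp [c1, h])
  rw [hx, mkQ, QuotientGroup.mk_mul, (QuotientGroup.eq_one_iff c1).mpr c1_mem, one_mul]

lemma coe_mul_mk (a b : Matrix (Fin 2) (Fin 2) ℂ) (ha : a.det = 1) (hb : b.det = 1) :
    (@HMul.hMul SL2 SL2 SL2 _ (Subtype.mk a ha) (Subtype.mk b hb)).1 = a * b := rfl

noncomputable def q0 : SL2 := ⟨!![(1 : ℂ) + (0)*I, (0 : ℂ) + (0)*I; (0 : ℂ) + (0)*I, (1 : ℂ) + (0)*I], by norm_num [Matrix.det_fin_two_of, Complex.ext_iff]⟩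
noncomputable def q1 : SL2 := ⟨!![(0 : ℂ) + (1)*I, (0 : ℂ) + (0)*I; (0 : ℂ) + (0)*I, (0 : ℂ) + (-1)*I], by norm_num [Matrix.det_fin_two_of, Complex.ext_iff]⟩
noncomputable def q2 : SL2 := ⟨!![(0 : ℂ) + (0)*I, (1 : ℂ) + (0)*I; (-1 : ℂ) + (0)*I, (0 : ℂ) + (0)*I], by norm_num [Matrix.det_fin_two_of, Complex.ext_iff]⟩
noncomputable def q3 : SL2 := ⟨!![(0 : ℂ) + (0)*I, (0 : ℂ) + (1)*I; (0 : ℂ) + (1)*I, (0 : ℂ) + (0)*I], by norm_num [Matrix.det_fin_two_of, Complex.ext_iff]⟩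
noncomputable def q4 : SL2 := ⟨!![(1/2 : ℂ) + (1/2)*I, (1/2 : ℂ) + (1/2)*I; (-1/2 : ℂ) + (1/2)*I, (1/2 : ℂ) + (-1/2)*I], by norm_num [Matrix.det_fin_two_of, Complex.ext_iff]⟩
noncomputable def q5 : SL2 := ⟨!![(1/2 : ℂ) + (1/2)*I, (1/2 : ℂ) + (-1/2)*I; (-1/2 : ℂ) + (-1/2)*I, (1/2 : ℂ) + (-1/2)*I], by norm_num [Matrix.det_fin_two_of, Complex.ext_iff]⟩
noncomputable def q6 : SL2 := ⟨!![(1/2 : ℂ) + (1/2)*I, (-1/2 : ℂ) + (1/2)*I; (1/2 : ℂ) + (1/2)*I, (1/2 : ℂ) + (-1/2)*I], by norm_num [Matrix.det_fin_two_of, Complex.ext_iff]⟩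
noncomputable def q7 : SL2 := ⟨!![(1/2 : ℂ) + (1/2)*I, (-1/2 : ℂ) + (-1/2)*I; (1/2 : ℂ) + (-1/2)*I, (1/2 : ℂ) + (-1/2)*I], by norm_num [Matrix.det_fin_two_of, Complex.ext_iff]⟩
noncomputable def q8 : SL2 := ⟨!![(1/2 : ℂ) + (-1/2)*I, (1/2 : ℂ) + (1/2)*I; (-1/2 : ℂ) + (1/2)*I, (1/2 : ℂ) + (1/2)*I], by norm_num [Matrix.det_fin_two_of, Complex.ext_iff]⟩
noncomputable def q9 : SL2 := ⟨!![(1/2 : ℂ) + (-1/2)*I, (1/2 : ℂ) + (-1/2)*I; (-1/2 : ℂ) + (-1/2)*I, (1/2 : ℂ) + (1/2)*I], by norm_num [Matrix.det_fin_two_of, Complex.ext_iff]⟩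
noncomputable def q10 : SL2 := ⟨!![(1/2 : ℂ) + (-1/2)*I, (-1/2 : ℂ) + (1/2)*I; (1/2 : ℂ) + (1/2)*I, (1/2 : ℂ) + (1/2)*I], by norm_num [Matrix.det_fin_two_of, Complex.ext_iff]⟩
noncomputable def q11 : SL2 := ⟨!![(1/2 : ℂ) + (-1/2)*I, (-1/2 : ℂ) + (-1/2)*I; (1/2 : ℂ) + (-1/2)*I, (1/2 : ℂ) + (1/2)*I], by norm_num [Matrix.det_fin_two_of, Complex.ext_iff]⟩

noncomputable def g : Fin 12 → Q2 := ![mkQ q0, mkQ q1, mkQ q2, mkQ q3, mkQ q4, mkQ q5, mkQ q6, mkQ q7, mkQ q8, mkQ q9, mkQ q10, mkQ q11]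

def p : Fin 12 → A4 := ![⟨1, by decide⟩, ⟨c[0,1]*c[2,3], by decide⟩, ⟨c[0,2]*c[1,3], by decide⟩, ⟨c[0,3]*c[1,2], by decide⟩, ⟨c[0,2,1], by decide⟩, ⟨c[1,3,2], by decide⟩, ⟨c[0,2,3], by decide⟩, ⟨c[0,1,3], by decide⟩, ⟨c[0,3,1], by decide⟩, ⟨c[0,3,2], by decide⟩, ⟨c[1,2,3], by decide⟩, ⟨c[0,1,2], by decide⟩]

lemma pbij : Function.Bijective p := by decide

noncomputable def pe : Fin 12 ≃ A4 := Equiv.ofBijective p pbij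

lemma pesymm (k : Fin 12) : pe.symm (p k) = k := pe.symm_apply_apply k

lemma gm_0_0 : g 0 * g 0 = g 0 := mk_eq_pos (x := q0 * q0) (y := q0) (by norm_num [q0, q0, q0, coe_mul_mk, Matrix.mul_fin_two, Complex.ext_iff, Matrix.ext_iff, funext_iff, Fin.forall_fin_two] <;> and_intros <;> first | ring | trivial)
lemma gm_0_1 : g 0 * g 1 = g 1 := mk_eq_pos (x := q0 * q1) (y := q1) (by norm_num [q0, q1, q1, coe_mul_mk, Matrix.mul_fin_two, Complex.ext_iff, Matrix.ext_iff, funext_iff, Fin.forall_fin_two] <;> and_intros <;> first | ring | trivial)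
lemma gm_0_2 : g 0 * g 2 = g 2 := mk_eq_pos (x := q0 * q2) (y := q2) (by norm_num [q0, q2, q2, coe_mul_mk, Matrix.mul_fin_two, Complex.ext_iff, Matrix.ext_iff, funext_iff, Fin.forall_fin_two] <;> and_intros <;> first | ring | trivial)
lemma gm_0_3 : g 0 * g 3 = g 3 := mk_eq_pos (x := q0 * q3) (y := q3) (by norm_num [q0, q3, q3, coe_mul_mk, Matrix.mul_fin_two, Complex.ext_iff, Matrix.ext_iff, funext_iff, Fin.forall_fin_two] <;> and_intros <;> first | ring | trivial)
lemma gm_0_4 : g 0 * g 4 = g 4 := mk_eq_pos (x := q0 * q4) (y := q4) (by norm_num [q0, q4, q4, coe_mul_mk, Matrix.mul_fin_two, Complex.ext_iff, Matrix.ext_iff, funext_iff, Fin.forall_fin_two] <;> and_intros <;> first | ring | trivial)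
lemma gm_0_5 : g 0 * g 5 = g 5 := mk_eq_pos (x := q0 * q5) (y := q5) (by norm_num [q0, q5, q5, coe_mul_mk, Matrix.mul_fin_two, Complex.ext_iff, Matrix.ext_iff, funext_iff, Fin.forall_fin_two] <;> and_intros <;> first | ring | trivial)
lemma gm_0_6 : g 0 * g 6 = g 6 := mk_eq_pos (x := q0 * q6) (y := q6) (by norm_num [q0, q6, q6, coe_mul_mk, Matrix.mul_fin_two, Complex.ext_iff, Matrix.ext_iff, funext_iff, Fin.forall_fin_two] <;> and_intros <;> first | ring | trivial)
lemma gm_0_7 : g 0 * g 7 = g 7 := mk_eq_pos (x := q0 * q7) (y := q7) (by norm_num [q0, q7, q7, coe_mul_mk, Matrix.mul_fin_two, Complex.ext_iff, Matrix.ext_iff, funext_iff, Fin.forall_fin_two] <;> and_intros <;> first | ring | trivial)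
lemma gm_0_8 : g 0 * g 8 = g 8 := mk_eq_pos (x := q0 * q8) (y := q8) (by norm_num [q0, q8, q8, coe_mul_mk, Matrix.mul_fin_two, Complex.ext_iff, Matrix.ext_iff, funext_iff, Fin.forall_fin_two] <;> and_intros <;> first | ring | trivial)
lemma gm_0_9 : g 0 * g 9 = g 9 := mk_eq_pos (x := q0 * q9) (y := q9) (by norm_num [q0, q9, q9, coe_mul_mk, Matrix.mul_fin_two, Complex.ext_iff, Matrix.ext_iff, funext_iff, Fin.forall_fin_two] <;> and_intros <;> first | ring | trivial)
lemma gm_0_10 : g 0 * g 10 = g 10 := mk_eq_pos (x := q0 * q10) (y := q10) (by norm_num [q0, q10, q10, coe_mul_mk, Matrix.mul_fin_two, Complex.ext_iff, Matrix.ext_iff, funext_iff, Fin.forall_fin_two] <;> and_intros <;> first | ring | trivial)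
lemma gm_0_11 : g 0 * g 11 = g 11 := mk_eq_pos (x := q0 * q11) (y := q11) (by norm_num [q0, q11, q11, coe_mul_mk, Matrix.mul_fin_two, Complex.ext_iff, Matrix.ext_iff, funext_iff, Fin.forall_fin_two] <;> and_intros <;> first | ring | trivial)
lemma gm_1_0 : g 1 * g 0 = g 1 := mk_eq_pos (x := q1 * q0) (y := q1) (by norm_num [q1, q0, q1, coe_mul_mk, Matrix.mul_fin_two, Complex.ext_iff, Matrix.ext_iff, funext_iff, Fin.forall_fin_two] <;> and_intros <;> first | ring | trivial)
lemma gm_1_1 : g 1 * g 1 = g 0 := mk_eq_neg (x := q1 * q1) (y := q0) (by norm_num [q1, q1, q0, coe_mul_mk, Matrix.mul_fin_two, Complex.ext_iff, Matrix.ext_iff, funext_iff, Fin.forall_fin_two] <;> and_intros <;> first | ring | trivial)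
lemma gm_1_2 : g 1 * g 2 = g 3 := mk_eq_pos (x := q1 * q2) (y := q3) (by norm_num [q1, q2, q3, coe_mul_mk, Matrix.mul_fin_two, Complex.ext_iff, Matrix.ext_iff, funext_iff, Fin.forall_fin_two] <;> and_intros <;> first | ring | trivial)
lemma gm_1_3 : g 1 * g 3 = g 2 := mk_eq_neg (x := q1 * q3) (y := q2) (by norm_num [q1, q3, q2, coe_mul_mk, Matrix.mul_fin_two, Complex.ext_iff, Matrix.ext_iff, funext_iff, Fin.forall_fin_two] <;> and_intros <;> first | ring | trivial)
lemma gm_1_4 : g 1 * g 4 = g 9 := mk_eq_neg (x := q1 * q4) (y := q9) (by norm_num [q1, q4, q9, coe_mul_mk, Matrix.mul_fin_two, Complex.ext_iff, Matrix.ext_iff, funext_iff, Fin.forall_fin_two] <;> and_intros <;> first | ring | trivial)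
lemma gm_1_5 : g 1 * g 5 = g 11 := mk_eq_neg (x := q1 * q5) (y := q11) (by norm_num [q1, q5, q11, coe_mul_mk, Matrix.mul_fin_two, Complex.ext_iff, Matrix.ext_iff, funext_iff, Fin.forall_fin_two] <;> and_intros <;> first | ring | trivial)
lemma gm_1_6 : g 1 * g 6 = g 8 := mk_eq_neg (x := q1 * q6) (y := q8) (by norm_num [q1, q6, q8, coe_mul_mk, Matrix.mul_fin_two, Complex.ext_iff, Matrix.ext_iff, funext_iff, Fin.forall_fin_two] <;> and_intros <;> first | ring | trivial)
lemma gm_1_7 : g 1 * g 7 = g 10 := mk_eq_neg (x := q1 * q7) (y := q10) (by norm_num [q1, q7, q10, coe_mul_mk, Matrix.mul_fin_two, Complex.ext_iff, Matrix.ext_iff, funext_iff, Fin.forall_fin_two] <;> and_intros <;> first | ring | trivial)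
lemma gm_1_8 : g 1 * g 8 = g 6 := mk_eq_pos (x := q1 * q8) (y := q6) (by norm_num [q1, q8, q6, coe_mul_mk, Matrix.mul_fin_two, Complex.ext_iff, Matrix.ext_iff, funext_iff, Fin.forall_fin_two] <;> and_intros <;> first | ring | trivial)
lemma gm_1_9 : g 1 * g 9 = g 4 := mk_eq_pos (x := q1 * q9) (y := q4) (by norm_num [q1, q9, q4, coe_mul_mk, Matrix.mul_fin_two, Complex.ext_iff, Matrix.ext_iff, funext_iff, Fin.forall_fin_two] <;> and_intros <;> first | ring | trivial)
lemma gm_1_10 : g 1 * g 10 = g 7 := mk_eq_pos (x := q1 * q10) (y := q7) (by norm_num [q1, q10, q7, coe_mul_mk, Matrix.mul_fin_two, Complex.ext_iff, Matrix.ext_iff, funext_iff, Fin.forall_fin_two] <;> and_intros <;> first | ring | trivial)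
lemma gm_1_11 : g 1 * g 11 = g 5 := mk_eq_pos (x := q1 * q11) (y := q5) (by norm_num [q1, q11, q5, coe_mul_mk, Matrix.mul_fin_two, Complex.ext_iff, Matrix.ext_iff, funext_iff, Fin.forall_fin_two] <;> and_intros <;> first | ring | trivial)
lemma gm_2_0 : g 2 * g 0 = g 2 := mk_eq_pos (x := q2 * q0) (y := q2) (by norm_num [q2, q0, q2, coe_mul_mk, Matrix.mul_fin_two, Complex.ext_iff, Matrix.ext_iff, funext_iff, Fin.forall_fin_two] <;> and_intros <;> first | ring | trivial)
lemma gm_2_1 : g 2 * g 1 = g 3 := mk_eq_neg (x := q2 * q1) (y := q3) (by norm_num [q2, q1, q3, coe_mul_mk, Matrix.mul_fin_two, Complex.ext_iff, Matrix.ext_iff, funext_iff, Fin.forall_fin_two] <;> and_intros <;> first | ring | trivial)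
lemma gm_2_2 : g 2 * g 2 = g 0 := mk_eq_neg (x := q2 * q2) (y := q0) (by norm_num [q2, q2, q0, coe_mul_mk, Matrix.mul_fin_two, Complex.ext_iff, Matrix.ext_iff, funext_iff, Fin.forall_fin_two] <;> and_intros <;> first | ring | trivial)
lemma gm_2_3 : g 2 * g 3 = g 1 := mk_eq_pos (x := q2 * q3) (y := q1) (by norm_num [q2, q3, q1, coe_mul_mk, Matrix.mul_fin_two, Complex.ext_iff, Matrix.ext_iff, funext_iff, Fin.forall_fin_two] <;> and_intros <;> first | ring | trivial)
lemma gm_2_4 : g 2 * g 4 = g 10 := mk_eq_neg (x := q2 * q4) (y := q10) (by norm_num [q2, q4, q10, coe_mul_mk, Matrix.mul_fin_two, Complex.ext_iff, Matrix.ext_iff, funext_iff, Fin.forall_fin_two] <;> and_intros <;> first | ring | trivial)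
lemma gm_2_5 : g 2 * g 5 = g 6 := mk_eq_neg (x := q2 * q5) (y := q6) (by norm_num [q2, q5, q6, coe_mul_mk, Matrix.mul_fin_two, Complex.ext_iff, Matrix.ext_iff, funext_iff, Fin.forall_fin_two] <;> and_intros <;> first | ring | trivial)
lemma gm_2_6 : g 2 * g 6 = g 5 := mk_eq_pos (x := q2 * q6) (y := q5) (by norm_num [q2, q6, q5, coe_mul_mk, Matrix.mul_fin_two, Complex.ext_iff, Matrix.ext_iff, funext_iff, Fin.forall_fin_two] <;> and_intros <;> first | ring | trivial)
lemma gm_2_7 : g 2 * g 7 = g 9 := mk_eq_pos (x := q2 * q7) (y := q9) (by norm_num [q2, q7, q9, coe_mul_mk, Matrix.mul_fin_two, Complex.ext_iff, Matrix.ext_iff, funext_iff, Fin.forall_fin_two] <;> and_intros <;> first | ring | trivial)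
lemma gm_2_8 : g 2 * g 8 = g 11 := mk_eq_neg (x := q2 * q8) (y := q11) (by norm_num [q2, q8, q11, coe_mul_mk, Matrix.mul_fin_two, Complex.ext_iff, Matrix.ext_iff, funext_iff, Fin.forall_fin_two] <;> and_intros <;> first | ring | trivial)
lemma gm_2_9 : g 2 * g 9 = g 7 := mk_eq_neg (x := q2 * q9) (y := q7) (by norm_num [q2, q9, q7, coe_mul_mk, Matrix.mul_fin_two, Complex.ext_iff, Matrix.ext_iff, funext_iff, Fin.forall_fin_two] <;> and_intros <;> first | ring | trivial)
lemma gm_2_10 : g 2 * g 10 = g 4 := mk_eq_pos (x := q2 * q10) (y := q4) (by norm_num [q2, q10, q4, coe_mul_mk, Matrix.mul_fin_two, Complex.ext_iff, Matrix.ext_iff, funext_iff, Fin.forall_fin_two] <;> and_intros <;> first | ring | trivial)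
lemma gm_2_11 : g 2 * g 11 = g 8 := mk_eq_pos (x := q2 * q11) (y := q8) (by norm_num [q2, q11, q8, coe_mul_mk, Matrix.mul_fin_two, Complex.ext_iff, Matrix.ext_iff, funext_iff, Fin.forall_fin_two] <;> and_intros <;> first | ring | trivial)
lemma gm_3_0 : g 3 * g 0 = g 3 := mk_eq_pos (x := q3 * q0) (y := q3) (by norm_num [q3, q0, q3, coe_mul_mk, Matrix.mul_fin_two, Complex.ext_iff, Matrix.ext_iff, funext_iff, Fin.forall_fin_two] <;> and_intros <;> first | ring | trivial)
lemma gm_3_1 : g 3 * g 1 = g 2 := mk_eq_pos (x := q3 * q1) (y := q2) (by norm_num [q3, q1, q2, coe_mul_mk, Matrix.mul_fin_two, Complex.ext_iff, Matrix.ext_iff, funext_iff, Fin.forall_fin_two] <;> and_intros <;> first | ring | trivial)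
lemma gm_3_2 : g 3 * g 2 = g 1 := mk_eq_neg (x := q3 * q2) (y := q1) (by norm_num [q3, q2, q1, coe_mul_mk, Matrix.mul_fin_two, Complex.ext_iff, Matrix.ext_iff, funext_iff, Fin.forall_fin_two] <;> and_intros <;> first | ring | trivial)
lemma gm_3_3 : g 3 * g 3 = g 0 := mk_eq_neg (x := q3 * q3) (y := q0) (by norm_num [q3, q3, q0, coe_mul_mk, Matrix.mul_fin_two, Complex.ext_iff, Matrix.ext_iff, funext_iff, Fin.forall_fin_two] <;> and_intros <;> first | ring | trivial)
lemma gm_3_4 : g 3 * g 4 = g 7 := mk_eq_neg (x := q3 * q4) (y := q7) (by norm_num [q3, q4, q7, coe_mul_mk, Matrix.mul_fin_two, Complex.ext_iff, Matrix.ext_iff, funext_iff, Fin.forall_fin_two] <;> and_intros <;> first | ring | trivial)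
lemma gm_3_5 : g 3 * g 5 = g 8 := mk_eq_pos (x := q3 * q5) (y := q8) (by norm_num [q3, q5, q8, coe_mul_mk, Matrix.mul_fin_two, Complex.ext_iff, Matrix.ext_iff, funext_iff, Fin.forall_fin_two] <;> and_intros <;> first | ring | trivial)
lemma gm_3_6 : g 3 * g 6 = g 11 := mk_eq_neg (x := q3 * q6) (y := q11) (by norm_num [q3, q6, q11, coe_mul_mk, Matrix.mul_fin_two, Complex.ext_iff, Matrix.ext_iff, funext_iff, Fin.forall_fin_two] <;> and_intros <;> first | ring | trivial)
lemma gm_3_7 : g 3 * g 7 = g 4 := mk_eq_pos (x := q3 * q7) (y := q4) (by norm_num [q3, q7, q4, coe_mul_mk, Matrix.mul_fin_two, Complex.ext_iff, Matrix.ext_iff, funext_iff, Fin.forall_fin_two] <;> and_intros <;> first | ring | trivial)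
lemma gm_3_8 : g 3 * g 8 = g 5 := mk_eq_neg (x := q3 * q8) (y := q5) (by norm_num [q3, q8, q5, coe_mul_mk, Matrix.mul_fin_two, Complex.ext_iff, Matrix.ext_iff, funext_iff, Fin.forall_fin_two] <;> and_intros <;> first | ring | trivial)
lemma gm_3_9 : g 3 * g 9 = g 10 := mk_eq_pos (x := q3 * q9) (y := q10) (by norm_num [q3, q9, q10, coe_mul_mk, Matrix.mul_fin_two, Complex.ext_iff, Matrix.ext_iff, funext_iff, Fin.forall_fin_two] <;> and_intros <;> first | ring | trivial)
lemma gm_3_10 : g 3 * g 10 = g 9 := mk_eq_neg (x := q3 * q10) (y := q9) (by norm_num [q3, q10, q9, coe_mul_mk, Matrix.mul_fin_two, Complex.ext_iff, Matrix.ext_iff, funext_iff, Fin.forall_fin_two] <;> and_intros <;> first | ring | trivial)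
lemma gm_3_11 : g 3 * g 11 = g 6 := mk_eq_pos (x := q3 * q11) (y := q6) (by norm_num [q3, q11, q6, coe_mul_mk, Matrix.mul_fin_two, Complex.ext_iff, Matrix.ext_iff, funext_iff, Fin.forall_fin_two] <;> and_intros <;> first | ring | trivial)
lemma gm_4_0 : g 4 * g 0 = g 4 := mk_eq_pos (x := q4 * q0) (y := q4) (by norm_num [q4, q0, q4, coe_mul_mk, Matrix.mul_fin_two, Complex.ext_iff, Matrix.ext_iff, funext_iff, Fin.forall_fin_two] <;> and_intros <;> first | ring | trivial)
lemma gm_4_1 : g 4 * g 1 = g 10 := mk_eq_neg (x := q4 * q1) (y := q10) (by norm_num [q4, q1, q10, coe_mul_mk, Matrix.mul_fin_two, Complex.ext_iff, Matrix.ext_iff, funext_iff, Fin.forall_fin_two] <;> and_intros <;> first | ring | trivial)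
lemma gm_4_2 : g 4 * g 2 = g 7 := mk_eq_neg (x := q4 * q2) (y := q7) (by norm_num [q4, q2, q7, coe_mul_mk, Matrix.mul_fin_two, Complex.ext_iff, Matrix.ext_iff, funext_iff, Fin.forall_fin_two] <;> and_intros <;> first | ring | trivial)
lemma gm_4_3 : g 4 * g 3 = g 9 := mk_eq_neg (x := q4 * q3) (y := q9) (by norm_num [q4, q3, q9, coe_mul_mk, Matrix.mul_fin_two, Complex.ext_iff, Matrix.ext_iff, funext_iff, Fin.forall_fin_two] <;> and_intros <;> first | ring | trivial)
lemma gm_4_4 : g 4 * g 4 = g 11 := mk_eq_neg (x := q4 * q4) (y := q11) (by norm_num [q4, q4, q11, coe_mul_mk, Matrix.mul_fin_two, Complex.ext_iff, Matrix.ext_iff, funext_iff, Fin.forall_fin_two] <;> and_intros <;> first | ring | trivial)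
lemma gm_4_5 : g 4 * g 5 = g 2 := mk_eq_pos (x := q4 * q5) (y := q2) (by norm_num [q4, q5, q2, coe_mul_mk, Matrix.mul_fin_two, Complex.ext_iff, Matrix.ext_iff, funext_iff, Fin.forall_fin_two] <;> and_intros <;> first | ring | trivial)
lemma gm_4_6 : g 4 * g 6 = g 1 := mk_eq_pos (x := q4 * q6) (y := q1) (by norm_num [q4, q6, q1, coe_mul_mk, Matrix.mul_fin_two, Complex.ext_iff, Matrix.ext_iff, funext_iff, Fin.forall_fin_two] <;> and_intros <;> first | ring | trivial)
lemma gm_4_7 : g 4 * g 7 = g 5 := mk_eq_pos (x := q4 * q7) (y := q5) (by norm_num [q4, q7, q5, coe_mul_mk, Matrix.mul_fin_two, Complex.ext_iff, Matrix.ext_iff, funext_iff, Fin.forall_fin_two] <;> and_intros <;> first | ring | trivial)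
lemma gm_4_8 : g 4 * g 8 = g 3 := mk_eq_pos (x := q4 * q8) (y := q3) (by norm_num [q4, q8, q3, coe_mul_mk, Matrix.mul_fin_two, Complex.ext_iff, Matrix.ext_iff, funext_iff, Fin.forall_fin_two] <;> and_intros <;> first | ring | trivial)
lemma gm_4_9 : g 4 * g 9 = g 8 := mk_eq_pos (x := q4 * q9) (y := q8) (by norm_num [q4, q9, q8, coe_mul_mk, Matrix.mul_fin_two, Complex.ext_iff, Matrix.ext_iff, funext_iff, Fin.forall_fin_two] <;> and_intros <;> first | ring | trivial)
lemma gm_4_10 : g 4 * g 10 = g 6 := mk_eq_pos (x := q4 * q10) (y := q6) (by norm_num [q4, q10, q6, coe_mul_mk, Matrix.mul_fin_two, Complex.ext_iff, Matrix.ext_iff, funext_iff, Fin.forall_fin_two] <;> and_intros <;> first | ring | trivial)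
lemma gm_4_11 : g 4 * g 11 = g 0 := mk_eq_pos (x := q4 * q11) (y := q0) (by norm_num [q4, q11, q0, coe_mul_mk, Matrix.mul_fin_two, Complex.ext_iff, Matrix.ext_iff, funext_iff, Fin.forall_fin_two] <;> and_intros <;> first | ring | trivial)
lemma gm_5_0 : g 5 * g 0 = g 5 := mk_eq_pos (x := q5 * q0) (y := q5) (by norm_num [q5, q0, q5, coe_mul_mk, Matrix.mul_fin_two, Complex.ext_iff, Matrix.ext_iff, funext_iff, Fin.forall_fin_two] <;> and_intros <;> first | ring | trivial)
lemma gm_5_1 : g 5 * g 1 = g 8 := mk_eq_neg (x := q5 * q1) (y := q8) (by norm_num [q5, q1, q8, coe_mul_mk, Matrix.mul_fin_two, Complex.ext_iff, Matrix.ext_iff, funext_iff, Fin.forall_fin_two] <;> and_intros <;> first | ring | trivial)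
lemma gm_5_2 : g 5 * g 2 = g 11 := mk_eq_neg (x := q5 * q2) (y := q11) (by norm_num [q5, q2, q11, coe_mul_mk, Matrix.mul_fin_two, Complex.ext_iff, Matrix.ext_iff, funext_iff, Fin.forall_fin_two] <;> and_intros <;> first | ring | trivial)
lemma gm_5_3 : g 5 * g 3 = g 6 := mk_eq_pos (x := q5 * q3) (y := q6) (by norm_num [q5, q3, q6, coe_mul_mk, Matrix.mul_fin_two, Complex.ext_iff, Matrix.ext_iff, funext_iff, Fin.forall_fin_two] <;> and_intros <;> first | ring | trivial)
lemma gm_5_4 : g 5 * g 4 = g 1 := mk_eq_pos (x := q5 * q4) (y := q1) (by norm_num [q5, q4, q1, coe_mul_mk, Matrix.mul_fin_two, Complex.ext_iff, Matrix.ext_iff, funext_iff, Fin.forall_fin_two] <;> and_intros <;> first | ring | trivial)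
lemma gm_5_5 : g 5 * g 5 = g 10 := mk_eq_neg (x := q5 * q5) (y := q10) (by norm_num [q5, q5, q10, coe_mul_mk, Matrix.mul_fin_two, Complex.ext_iff, Matrix.ext_iff, funext_iff, Fin.forall_fin_two] <;> and_intros <;> first | ring | trivial)
lemma gm_5_6 : g 5 * g 6 = g 7 := mk_eq_pos (x := q5 * q6) (y := q7) (by norm_num [q5, q6, q7, coe_mul_mk, Matrix.mul_fin_two, Complex.ext_iff, Matrix.ext_iff, funext_iff, Fin.forall_fin_two] <;> and_intros <;> first | ring | trivial)
lemma gm_5_7 : g 5 * g 7 = g 3 := mk_eq_neg (x := q5 * q7) (y := q3) (by norm_num [q5, q7, q3, coe_mul_mk, Matrix.mul_fin_two, Complex.ext_iff, Matrix.ext_iff, funext_iff, Fin.forall_fin_two] <;> and_intros <;> first | ring | trivial)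
lemma gm_5_8 : g 5 * g 8 = g 4 := mk_eq_pos (x := q5 * q8) (y := q4) (by norm_num [q5, q8, q4, coe_mul_mk, Matrix.mul_fin_two, Complex.ext_iff, Matrix.ext_iff, funext_iff, Fin.forall_fin_two] <;> and_intros <;> first | ring | trivial)
lemma gm_5_9 : g 5 * g 9 = g 2 := mk_eq_pos (x := q5 * q9) (y := q2) (by norm_num [q5, q9, q2, coe_mul_mk, Matrix.mul_fin_two, Complex.ext_iff, Matrix.ext_iff, funext_iff, Fin.forall_fin_two] <;> and_intros <;> first | ring | trivial)
lemma gm_5_10 : g 5 * g 10 = g 0 := mk_eq_pos (x := q5 * q10) (y := q0) (by norm_num [q5, q10, q0, coe_mul_mk, Matrix.mul_fin_two, Complex.ext_iff, Matrix.ext_iff, funext_iff, Fin.forall_fin_two] <;> and_intros <;> first | ring | trivial)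
lemma gm_5_11 : g 5 * g 11 = g 9 := mk_eq_pos (x := q5 * q11) (y := q9) (by norm_num [q5, q11, q9, coe_mul_mk, Matrix.mul_fin_two, Complex.ext_iff, Matrix.ext_iff, funext_iff, Fin.forall_fin_two] <;> and_intros <;> first | ring | trivial)
lemma gm_6_0 : g 6 * g 0 = g 6 := mk_eq_pos (x := q6 * q0) (y := q6) (by norm_num [q6, q0, q6, coe_mul_mk, Matrix.mul_fin_two, Complex.ext_iff, Matrix.ext_iff, funext_iff, Fin.forall_fin_two] <;> and_intros <;> first | ring | trivial)
lemma gm_6_1 : g 6 * g 1 = g 11 := mk_eq_neg (x := q6 * q1) (y := q11) (by norm_num [q6, q1, q11, coe_mul_mk, Matrix.mul_fin_two, Complex.ext_iff, Matrix.ext_iff, funext_iff, Fin.forall_fin_two] <;> and_intros <;> first | ring | trivial)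
lemma gm_6_2 : g 6 * g 2 = g 8 := mk_eq_pos (x := q6 * q2) (y := q8) (by norm_num [q6, q2, q8, coe_mul_mk, Matrix.mul_fin_two, Complex.ext_iff, Matrix.ext_iff, funext_iff, Fin.forall_fin_two] <;> and_intros <;> first | ring | trivial)
lemma gm_6_3 : g 6 * g 3 = g 5 := mk_eq_neg (x := q6 * q3) (y := q5) (by norm_num [q6, q3, q5, coe_mul_mk, Matrix.mul_fin_two, Complex.ext_iff, Matrix.ext_iff, funext_iff, Fin.forall_fin_two] <;> and_intros <;> first | ring | trivial)
lemma gm_6_4 : g 6 * g 4 = g 3 := mk_eq_pos (x := q6 * q4) (y := q3) (by norm_num [q6, q4, q3, coe_mul_mk, Matrix.mul_fin_two, Complex.ext_iff, Matrix.ext_iff, funext_iff, Fin.forall_fin_two] <;> and_intros <;> first | ring | trivial)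
lemma gm_6_5 : g 6 * g 5 = g 4 := mk_eq_pos (x := q6 * q5) (y := q4) (by norm_num [q6, q5, q4, coe_mul_mk, Matrix.mul_fin_two, Complex.ext_iff, Matrix.ext_iff, funext_iff, Fin.forall_fin_two] <;> and_intros <;> first | ring | trivial)
lemma gm_6_6 : g 6 * g 6 = g 9 := mk_eq_neg (x := q6 * q6) (y := q9) (by norm_num [q6, q6, q9, coe_mul_mk, Matrix.mul_fin_two, Complex.ext_iff, Matrix.ext_iff, funext_iff, Fin.forall_fin_two] <;> and_intros <;> first | ring | trivial)
lemma gm_6_7 : g 6 * g 7 = g 1 := mk_eq_pos (x := q6 * q7) (y := q1) (by norm_num [q6, q7, q1, coe_mul_mk, Matrix.mul_fin_two, Complex.ext_iff, Matrix.ext_iff, funext_iff, Fin.forall_fin_two] <;> and_intros <;> first | ring | trivial)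
lemma gm_6_8 : g 6 * g 8 = g 10 := mk_eq_pos (x := q6 * q8) (y := q10) (by norm_num [q6, q8, q10, coe_mul_mk, Matrix.mul_fin_two, Complex.ext_iff, Matrix.ext_iff, funext_iff, Fin.forall_fin_two] <;> and_intros <;> first | ring | trivial)
lemma gm_6_9 : g 6 * g 9 = g 0 := mk_eq_pos (x := q6 * q9) (y := q0) (by norm_num [q6, q9, q0, coe_mul_mk, Matrix.mul_fin_two, Complex.ext_iff, Matrix.ext_iff, funext_iff, Fin.forall_fin_two] <;> and_intros <;> first | ring | trivial)
lemma gm_6_10 : g 6 * g 10 = g 2 := mk_eq_neg (x := q6 * q10) (y := q2) (by norm_num [q6, q10, q2, coe_mul_mk, Matrix.mul_fin_two, Complex.ext_iff, Matrix.ext_iff, funext_iff, Fin.forall_fin_two] <;> and_intros <;> first | ring | trivial)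
lemma gm_6_11 : g 6 * g 11 = g 7 := mk_eq_pos (x := q6 * q11) (y := q7) (by norm_num [q6, q11, q7, coe_mul_mk, Matrix.mul_fin_two, Complex.ext_iff, Matrix.ext_iff, funext_iff, Fin.forall_fin_two] <;> and_intros <;> first | ring | trivial)
lemma gm_7_0 : g 7 * g 0 = g 7 := mk_eq_pos (x := q7 * q0) (y := q7) (by norm_num [q7, q0, q7, coe_mul_mk, Matrix.mul_fin_two, Complex.ext_iff, Matrix.ext_iff, funext_iff, Fin.forall_fin_two] <;> and_intros <;> first | ring | trivial)
lemma gm_7_1 : g 7 * g 1 = g 9 := mk_eq_neg (x := q7 * q1) (y := q9) (by norm_num [q7, q1, q9, coe_mul_mk, Matrix.mul_fin_two, Complex.ext_iff, Matrix.ext_iff, funext_iff, Fin.forall_fin_two] <;> and_intros <;> first | ring | trivial)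
lemma gm_7_2 : g 7 * g 2 = g 4 := mk_eq_pos (x := q7 * q2) (y := q4) (by norm_num [q7, q2, q4, coe_mul_mk, Matrix.mul_fin_two, Complex.ext_iff, Matrix.ext_iff, funext_iff, Fin.forall_fin_two] <;> and_intros <;> first | ring | trivial)
lemma gm_7_3 : g 7 * g 3 = g 10 := mk_eq_pos (x := q7 * q3) (y := q10) (by norm_num [q7, q3, q10, coe_mul_mk, Matrix.mul_fin_two, Complex.ext_iff, Matrix.ext_iff, funext_iff, Fin.forall_fin_two] <;> and_intros <;> first | ring | trivial)
lemma gm_7_4 : g 7 * g 4 = g 6 := mk_eq_pos (x := q7 * q4) (y := q6) (by norm_num [q7, q4, q6, coe_mul_mk, Matrix.mul_fin_two, Complex.ext_iff, Matrix.ext_iff, funext_iff, Fin.forall_fin_two] <;> and_intros <;> first | ring | trivial)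
lemma gm_7_5 : g 7 * g 5 = g 1 := mk_eq_pos (x := q7 * q5) (y := q1) (by norm_num [q7, q5, q1, coe_mul_mk, Matrix.mul_fin_two, Complex.ext_iff, Matrix.ext_iff, funext_iff, Fin.forall_fin_two] <;> and_intros <;> first | ring | trivial)
lemma gm_7_6 : g 7 * g 6 = g 2 := mk_eq_neg (x := q7 * q6) (y := q2) (by norm_num [q7, q6, q2, coe_mul_mk, Matrix.mul_fin_two, Complex.ext_iff, Matrix.ext_iff, funext_iff, Fin.forall_fin_two] <;> and_intros <;> first | ring | trivial)
lemma gm_7_7 : g 7 * g 7 = g 8 := mk_eq_neg (x := q7 * q7) (y := q8) (by norm_num [q7, q7, q8, coe_mul_mk, Matrix.mul_fin_two, Complex.ext_iff, Matrix.ext_iff, funext_iff, Fin.forall_fin_two] <;> and_intros <;> first | ring | trivial)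
lemma gm_7_8 : g 7 * g 8 = g 0 := mk_eq_pos (x := q7 * q8) (y := q0) (by norm_num [q7, q8, q0, coe_mul_mk, Matrix.mul_fin_two, Complex.ext_iff, Matrix.ext_iff, funext_iff, Fin.forall_fin_two] <;> and_intros <;> first | ring | trivial)
lemma gm_7_9 : g 7 * g 9 = g 5 := mk_eq_pos (x := q7 * q9) (y := q5) (by norm_num [q7, q9, q5, coe_mul_mk, Matrix.mul_fin_two, Complex.ext_iff, Matrix.ext_iff, funext_iff, Fin.forall_fin_two] <;> and_intros <;> first | ring | trivial)
lemma gm_7_10 : g 7 * g 10 = g 11 := mk_eq_pos (x := q7 * q10) (y := q11) (by norm_num [q7, q10, q11, coe_mul_mk, Matrix.mul_fin_two, Complex.ext_iff, Matrix.ext_iff, funext_iff, Fin.forall_fin_two] <;> and_intros <;> first | ring | trivial)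
lemma gm_7_11 : g 7 * g 11 = g 3 := mk_eq_neg (x := q7 * q11) (y := q3) (by norm_num [q7, q11, q3, coe_mul_mk, Matrix.mul_fin_two, Complex.ext_iff, Matrix.ext_iff, funext_iff, Fin.forall_fin_two] <;> and_intros <;> first | ring | trivial)
lemma gm_8_0 : g 8 * g 0 = g 8 := mk_eq_pos (x := q8 * q0) (y := q8) (by norm_num [q8, q0, q8, coe_mul_mk, Matrix.mul_fin_two, Complex.ext_iff, Matrix.ext_iff, funext_iff, Fin.forall_fin_two] <;> and_intros <;> first | ring | trivial)
lemma gm_8_1 : g 8 * g 1 = g 5 := mk_eq_pos (x := q8 * q1) (y := q5) (by norm_num [q8, q1, q5, coe_mul_mk, Matrix.mul_fin_two, Complex.ext_iff, Matrix.ext_iff, funext_iff, Fin.forall_fin_two] <;> and_intros <;> first | ring | trivial)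
lemma gm_8_2 : g 8 * g 2 = g 6 := mk_eq_neg (x := q8 * q2) (y := q6) (by norm_num [q8, q2, q6, coe_mul_mk, Matrix.mul_fin_two, Complex.ext_iff, Matrix.ext_iff, funext_iff, Fin.forall_fin_two] <;> and_intros <;> first | ring | trivial)
lemma gm_8_3 : g 8 * g 3 = g 11 := mk_eq_neg (x := q8 * q3) (y := q11) (by norm_num [q8, q3, q11, coe_mul_mk, Matrix.mul_fin_two, Complex.ext_iff, Matrix.ext_iff, funext_iff, Fin.forall_fin_two] <;> and_intros <;> first | ring | trivial)
lemma gm_8_4 : g 8 * g 4 = g 2 := mk_eq_pos (x := q8 * q4) (y := q2) (by norm_num [q8, q4, q2, coe_mul_mk, Matrix.mul_fin_two, Complex.ext_iff, Matrix.ext_iff, funext_iff, Fin.forall_fin_two] <;> and_intros <;> first | ring | trivial)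
lemma gm_8_5 : g 8 * g 5 = g 9 := mk_eq_pos (x := q8 * q5) (y := q9) (by norm_num [q8, q5, q9, coe_mul_mk, Matrix.mul_fin_two, Complex.ext_iff, Matrix.ext_iff, funext_iff, Fin.forall_fin_two] <;> and_intros <;> first | ring | trivial)
lemma gm_8_6 : g 8 * g 6 = g 4 := mk_eq_pos (x := q8 * q6) (y := q4) (by norm_num [q8, q6, q4, coe_mul_mk, Matrix.mul_fin_two, Complex.ext_iff, Matrix.ext_iff, funext_iff, Fin.forall_fin_two] <;> and_intros <;> first | ring | trivial)
lemma gm_8_7 : g 8 * g 7 = g 0 := mk_eq_pos (x := q8 * q7) (y := q0) (by norm_num [q8, q7, q0, coe_mul_mk, Matrix.mul_fin_two, Complex.ext_iff, Matrix.ext_iff, funext_iff, Fin.forall_fin_two] <;> and_intros <;> first | ring | trivial)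
lemma gm_8_8 : g 8 * g 8 = g 7 := mk_eq_neg (x := q8 * q8) (y := q7) (by norm_num [q8, q8, q7, coe_mul_mk, Matrix.mul_fin_two, Complex.ext_iff, Matrix.ext_iff, funext_iff, Fin.forall_fin_two] <;> and_intros <;> first | ring | trivial)
lemma gm_8_9 : g 8 * g 9 = g 1 := mk_eq_neg (x := q8 * q9) (y := q1) (by norm_num [q8, q9, q1, coe_mul_mk, Matrix.mul_fin_two, Complex.ext_iff, Matrix.ext_iff, funext_iff, Fin.forall_fin_two] <;> and_intros <;> first | ring | trivial)
lemma gm_8_10 : g 8 * g 10 = g 3 := mk_eq_pos (x := q8 * q10) (y := q3) (by norm_num [q8, q10, q3, coe_mul_mk, Matrix.mul_fin_two, Complex.ext_iff, Matrix.ext_iff, funext_iff, Fin.forall_fin_two] <;> and_intros <;> first | ring | trivial)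
lemma gm_8_11 : g 8 * g 11 = g 10 := mk_eq_pos (x := q8 * q11) (y := q10) (by norm_num [q8, q11, q10, coe_mul_mk, Matrix.mul_fin_two, Complex.ext_iff, Matrix.ext_iff, funext_iff, Fin.forall_fin_two] <;> and_intros <;> first | ring | trivial)
lemma gm_9_0 : g 9 * g 0 = g 9 := mk_eq_pos (x := q9 * q0) (y := q9) (by norm_num [q9, q0, q9, coe_mul_mk, Matrix.mul_fin_two, Complex.ext_iff, Matrix.ext_iff, funext_iff, Fin.forall_fin_two] <;> and_intros <;> first | ring | trivial)
lemma gm_9_1 : g 9 * g 1 = g 7 := mk_eq_pos (x := q9 * q1) (y := q7) (by norm_num [q9, q1, q7, coe_mul_mk, Matrix.mul_fin_two, Complex.ext_iff, Matrix.ext_iff, funext_iff, Fin.forall_fin_two] <;> and_intros <;> first | ring | trivial)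
lemma gm_9_2 : g 9 * g 2 = g 10 := mk_eq_neg (x := q9 * q2) (y := q10) (by norm_num [q9, q2, q10, coe_mul_mk, Matrix.mul_fin_two, Complex.ext_iff, Matrix.ext_iff, funext_iff, Fin.forall_fin_two] <;> and_intros <;> first | ring | trivial)
lemma gm_9_3 : g 9 * g 3 = g 4 := mk_eq_pos (x := q9 * q3) (y := q4) (by norm_num [q9, q3, q4, coe_mul_mk, Matrix.mul_fin_two, Complex.ext_iff, Matrix.ext_iff, funext_iff, Fin.forall_fin_two] <;> and_intros <;> first | ring | trivial)
lemma gm_9_4 : g 9 * g 4 = g 5 := mk_eq_pos (x := q9 * q4) (y := q5) (by norm_num [q9, q4, q5, coe_mul_mk, Matrix.mul_fin_two, Complex.ext_iff, Matrix.ext_iff, funext_iff, Fin.forall_fin_two] <;> and_intros <;> first | ring | trivial)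
lemma gm_9_5 : g 9 * g 5 = g 3 := mk_eq_neg (x := q9 * q5) (y := q3) (by norm_num [q9, q5, q3, coe_mul_mk, Matrix.mul_fin_two, Complex.ext_iff, Matrix.ext_iff, funext_iff, Fin.forall_fin_two] <;> and_intros <;> first | ring | trivial)
lemma gm_9_6 : g 9 * g 6 = g 0 := mk_eq_pos (x := q9 * q6) (y := q0) (by norm_num [q9, q6, q0, coe_mul_mk, Matrix.mul_fin_two, Complex.ext_iff, Matrix.ext_iff, funext_iff, Fin.forall_fin_two] <;> and_intros <;> first | ring | trivial)
lemma gm_9_7 : g 9 * g 7 = g 11 := mk_eq_pos (x := q9 * q7) (y := q11) (by norm_num [q9, q7, q11, coe_mul_mk, Matrix.mul_fin_two, Complex.ext_iff, Matrix.ext_iff, funext_iff, Fin.forall_fin_two] <;> and_intros <;> first | ring | trivial)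
lemma gm_9_8 : g 9 * g 8 = g 2 := mk_eq_pos (x := q9 * q8) (y := q2) (by norm_num [q9, q8, q2, coe_mul_mk, Matrix.mul_fin_two, Complex.ext_iff, Matrix.ext_iff, funext_iff, Fin.forall_fin_two] <;> and_intros <;> first | ring | trivial)
lemma gm_9_9 : g 9 * g 9 = g 6 := mk_eq_neg (x := q9 * q9) (y := q6) (by norm_num [q9, q9, q6, coe_mul_mk, Matrix.mul_fin_two, Complex.ext_iff, Matrix.ext_iff, funext_iff, Fin.forall_fin_two] <;> and_intros <;> first | ring | trivial)
lemma gm_9_10 : g 9 * g 10 = g 8 := mk_eq_pos (x := q9 * q10) (y := q8) (by norm_num [q9, q10, q8, coe_mul_mk, Matrix.mul_fin_two, Complex.ext_iff, Matrix.ext_iff, funext_iff, Fin.forall_fin_two] <;> and_intros <;> first | ring | trivial)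
lemma gm_9_11 : g 9 * g 11 = g 1 := mk_eq_neg (x := q9 * q11) (y := q1) (by norm_num [q9, q11, q1, coe_mul_mk, Matrix.mul_fin_two, Complex.ext_iff, Matrix.ext_iff, funext_iff, Fin.forall_fin_two] <;> and_intros <;> first | ring | trivial)
lemma gm_10_0 : g 10 * g 0 = g 10 := mk_eq_pos (x := q10 * q0) (y := q10) (by norm_num [q10, q0, q10, coe_mul_mk, Matrix.mul_fin_two, Complex.ext_iff, Matrix.ext_iff, funext_iff, Fin.forall_fin_two] <;> and_intros <;> first | ring | trivial)
lemma gm_10_1 : g 10 * g 1 = g 4 := mk_eq_pos (x := q10 * q1) (y := q4) (by norm_num [q10, q1, q4, coe_mul_mk, Matrix.mul_fin_two, Complex.ext_iff, Matrix.ext_iff, funext_iff, Fin.forall_fin_two] <;> and_intros <;> first | ring | trivial)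
lemma gm_10_2 : g 10 * g 2 = g 9 := mk_eq_pos (x := q10 * q2) (y := q9) (by norm_num [q10, q2, q9, coe_mul_mk, Matrix.mul_fin_two, Complex.ext_iff, Matrix.ext_iff, funext_iff, Fin.forall_fin_two] <;> and_intros <;> first | ring | trivial)
lemma gm_10_3 : g 10 * g 3 = g 7 := mk_eq_neg (x := q10 * q3) (y := q7) (by norm_num [q10, q3, q7, coe_mul_mk, Matrix.mul_fin_two, Complex.ext_iff, Matrix.ext_iff, funext_iff, Fin.forall_fin_two] <;> and_intros <;> first | ring | trivial)
lemma gm_10_4 : g 10 * g 4 = g 8 := mk_eq_pos (x := q10 * q4) (y := q8) (by norm_num [q10, q4, q8, coe_mul_mk, Matrix.mul_fin_two, Complex.ext_iff, Matrix.ext_iff, funext_iff, Fin.forall_fin_two] <;> and_intros <;> first | ring | trivial)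
lemma gm_10_5 : g 10 * g 5 = g 0 := mk_eq_pos (x := q10 * q5) (y := q0) (by norm_num [q10, q5, q0, coe_mul_mk, Matrix.mul_fin_two, Complex.ext_iff, Matrix.ext_iff, funext_iff, Fin.forall_fin_two] <;> and_intros <;> first | ring | trivial)
lemma gm_10_6 : g 10 * g 6 = g 3 := mk_eq_pos (x := q10 * q6) (y := q3) (by norm_num [q10, q6, q3, coe_mul_mk, Matrix.mul_fin_two, Complex.ext_iff, Matrix.ext_iff, funext_iff, Fin.forall_fin_two] <;> and_intros <;> first | ring | trivial)
lemma gm_10_7 : g 10 * g 7 = g 6 := mk_eq_pos (x := q10 * q7) (y := q6) (by norm_num [q10, q7, q6, coe_mul_mk, Matrix.mul_fin_two, Complex.ext_iff, Matrix.ext_iff, funext_iff, Fin.forall_fin_two] <;> and_intros <;> first | ring | trivial)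
lemma gm_10_8 : g 10 * g 8 = g 1 := mk_eq_neg (x := q10 * q8) (y := q1) (by norm_num [q10, q8, q1, coe_mul_mk, Matrix.mul_fin_two, Complex.ext_iff, Matrix.ext_iff, funext_iff, Fin.forall_fin_two] <;> and_intros <;> first | ring | trivial)
lemma gm_10_9 : g 10 * g 9 = g 11 := mk_eq_pos (x := q10 * q9) (y := q11) (by norm_num [q10, q9, q11, coe_mul_mk, Matrix.mul_fin_two, Complex.ext_iff, Matrix.ext_iff, funext_iff, Fin.forall_fin_two] <;> and_intros <;> first | ring | trivial)
lemma gm_10_10 : g 10 * g 10 = g 5 := mk_eq_neg (x := q10 * q10) (y := q5) (by norm_num [q10, q10, q5, coe_mul_mk, Matrix.mul_fin_two, Complex.ext_iff, Matrix.ext_iff, funext_iff, Fin.forall_fin_two] <;> and_intros <;> first | ring | trivial)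
lemma gm_10_11 : g 10 * g 11 = g 2 := mk_eq_neg (x := q10 * q11) (y := q2) (by norm_num [q10, q11, q2, coe_mul_mk, Matrix.mul_fin_two, Complex.ext_iff, Matrix.ext_iff, funext_iff, Fin.forall_fin_two] <;> and_intros <;> first | ring | trivial)
lemma gm_11_0 : g 11 * g 0 = g 11 := mk_eq_pos (x := q11 * q0) (y := q11) (by norm_num [q11, q0, q11, coe_mul_mk, Matrix.mul_fin_two, Complex.ext_iff, Matrix.ext_iff, funext_iff, Fin.forall_fin_two] <;> and_intros <;> first | ring | trivial)
lemma gm_11_1 : g 11 * g 1 = g 6 := mk_eq_pos (x := q11 * q1) (y := q6) (by norm_num [q11, q1, q6, coe_mul_mk, Matrix.mul_fin_two, Complex.ext_iff, Matrix.ext_iff, funext_iff, Fin.forall_fin_two] <;> and_intros <;> first | ring | trivial)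
lemma gm_11_2 : g 11 * g 2 = g 5 := mk_eq_pos (x := q11 * q2) (y := q5) (by norm_num [q11, q2, q5, coe_mul_mk, Matrix.mul_fin_two, Complex.ext_iff, Matrix.ext_iff, funext_iff, Fin.forall_fin_two] <;> and_intros <;> first | ring | trivial)
lemma gm_11_3 : g 11 * g 3 = g 8 := mk_eq_pos (x := q11 * q3) (y := q8) (by norm_num [q11, q3, q8, coe_mul_mk, Matrix.mul_fin_two, Complex.ext_iff, Matrix.ext_iff, funext_iff, Fin.forall_fin_two] <;> and_intros <;> first | ring | trivial)
lemma gm_11_4 : g 11 * g 4 = g 0 := mk_eq_pos (x := q11 * q4) (y := q0) (by norm_num [q11, q4, q0, coe_mul_mk, Matrix.mul_fin_two, Complex.ext_iff, Matrix.ext_iff, funext_iff, Fin.forall_fin_two] <;> and_intros <;> first | ring | trivial)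
lemma gm_11_5 : g 11 * g 5 = g 7 := mk_eq_pos (x := q11 * q5) (y := q7) (by norm_num [q11, q5, q7, coe_mul_mk, Matrix.mul_fin_two, Complex.ext_iff, Matrix.ext_iff, funext_iff, Fin.forall_fin_two] <;> and_intros <;> first | ring | trivial)
lemma gm_11_6 : g 11 * g 6 = g 10 := mk_eq_pos (x := q11 * q6) (y := q10) (by norm_num [q11, q6, q10, coe_mul_mk, Matrix.mul_fin_two, Complex.ext_iff, Matrix.ext_iff, funext_iff, Fin.forall_fin_two] <;> and_intros <;> first | ring | trivial)
lemma gm_11_7 : g 11 * g 7 = g 2 := mk_eq_neg (x := q11 * q7) (y := q2) (by norm_num [q11, q7, q2, coe_mul_mk, Matrix.mul_fin_two, Complex.ext_iff, Matrix.ext_iff, funext_iff, Fin.forall_fin_two] <;> and_intros <;> first | ring | trivial)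
lemma gm_11_8 : g 11 * g 8 = g 9 := mk_eq_pos (x := q11 * q8) (y := q9) (by norm_num [q11, q8, q9, coe_mul_mk, Matrix.mul_fin_two, Complex.ext_iff, Matrix.ext_iff, funext_iff, Fin.forall_fin_two] <;> and_intros <;> first | ring | trivial)
lemma gm_11_9 : g 11 * g 9 = g 3 := mk_eq_neg (x := q11 * q9) (y := q3) (by norm_num [q11, q9, q3, coe_mul_mk, Matrix.mul_fin_two, Complex.ext_iff, Matrix.ext_iff, funext_iff, Fin.forall_fin_two] <;> and_intros <;> first | ring | trivial)
lemma gm_11_10 : g 11 * g 10 = g 1 := mk_eq_neg (x := q11 * q10) (y := q1) (by norm_num [q11, q10, q1, coe_mul_mk, Matrix.mul_fin_two, Complex.ext_iff, Matrix.ext_iff, funext_iff, Fin.forall_fin_two] <;> and_intros <;> first | ring | trivial)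
lemma gm_11_11 : g 11 * g 11 = g 4 := mk_eq_neg (x := q11 * q11) (y := q4) (by norm_num [q11, q11, q4, coe_mul_mk, Matrix.mul_fin_two, Complex.ext_iff, Matrix.ext_iff, funext_iff, Fin.forall_fin_two] <;> and_intros <;> first | ring | trivial)

lemma key_0_0 : g (pe.symm (p 0 * p 0)) = g 0 * g 0 := by
  rw [show p 0 * p 0 = p 0 from by decide, pesymm]; exact (gm_0_0).symm
lemma key_0_1 : g (pe.symm (p 0 * p 1)) = g 0 * g 1 := by
  rw [show p 0 * p 1 = p 1 from by decide, pesymm]; exact (gm_0_1).symm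
lemma key_0_2 : g (pe.symm (p 0 * p 2)) = g 0 * g 2 := by
  rw [show p 0 * p 2 = p 2 from by decide, pesymm]; exact (gm_0_2).symm
lemma key_0_3 : g (pe.symm (p 0 * p 3)) = g 0 * g 3 := by
  rw [show p 0 * p 3 = p 3 from by decide, pesymm]; exact (gm_0_3).symm
lemma key_0_4 : g (pe.symm (p 0 * p 4)) = g 0 * g 4 := by
  rw [show p 0 * p 4 = p 4 from by decide, pesymm]; exact (gm_0_4).symm
lemma key_0_5 : g (pe.symm (p 0 * p 5)) = g 0 * g 5 := by
  rw [show p 0 * p 5 = p 5 from by decide, pesymm]; exact (gm_0_5).symm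
lemma key_0_6 : g (pe.symm (p 0 * p 6)) = g 0 * g 6 := by
  rw [show p 0 * p 6 = p 6 from by decide, pesymm]; exact (gm_0_6).symm
lemma key_0_7 : g (pe.symm (p 0 * p 7)) = g 0 * g 7 := by
  rw [show p 0 * p 7 = p 7 from by decide, pesymm]; exact (gm_0_7).symm
lemma key_0_8 : g (pe.symm (p 0 * p 8)) = g 0 * g 8 := by
  rw [show p 0 * p 8 = p 8 from by decide, pesymm]; exact (gm_0_8).symm
lemma key_0_9 : g (pe.symm (p 0 * p 9)) = g 0 * g 9 := by
  rw [show p 0 * p 9 = p 9 from by decide, pesymm]; exact (gm_0_9).symm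
lemma key_0_10 : g (pe.symm (p 0 * p 10)) = g 0 * g 10 := by
  rw [show p 0 * p 10 = p 10 from by decide, pesymm]; exact (gm_0_10).symm
lemma key_0_11 : g (pe.symm (p 0 * p 11)) = g 0 * g 11 := by
  rw [show p 0 * p 11 = p 11 from by decide, pesymm]; exact (gm_0_11).symm
lemma key_1_0 : g (pe.symm (p 1 * p 0)) = g 1 * g 0 := by
  rw [show p 1 * p 0 = p 1 from by decide, pesymm]; exact (gm_1_0).symm
lemma key_1_1 : g (pe.symm (p 1 * p 1)) = g 1 * g 1 := by
  rw [show p 1 * p 1 = p 0 from by decide, pesymm]; exact (gm_1_1).symm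
lemma key_1_2 : g (pe.symm (p 1 * p 2)) = g 1 * g 2 := by
  rw [show p 1 * p 2 = p 3 from by decide, pesymm]; exact (gm_1_2).symm
lemma key_1_3 : g (pe.symm (p 1 * p 3)) = g 1 * g 3 := by
  rw [show p 1 * p 3 = p 2 from by decide, pesymm]; exact (gm_1_3).symm
lemma key_1_4 : g (pe.symm (p 1 * p 4)) = g 1 * g 4 := by
  rw [show p 1 * p 4 = p 9 from by decide, pesymm]; exact (gm_1_4).symm
lemma key_1_5 : g (pe.symm (p 1 * p 5)) = g 1 * g 5 := by
  rw [show p 1 * p 5 = p 11 from by decide, pesymm]; exact (gm_1_5).symm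
lemma key_1_6 : g (pe.symm (p 1 * p 6)) = g 1 * g 6 := by
  rw [show p 1 * p 6 = p 8 from by decide, pesymm]; exact (gm_1_6).symm
lemma key_1_7 : g (pe.symm (p 1 * p 7)) = g 1 * g 7 := by
  rw [show p 1 * p 7 = p 10 from by decide, pesymm]; exact (gm_1_7).symm
lemma key_1_8 : g (pe.symm (p 1 * p 8)) = g 1 * g 8 := by
  rw [show p 1 * p 8 = p 6 from by decide, pesymm]; exact (gm_1_8).symm
lemma key_1_9 : g (pe.symm (p 1 * p 9)) = g 1 * g 9 := by
  rw [show p 1 * p 9 = p 4 from by decide, pesymm]; exact (gm_1_9).symm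
lemma key_1_10 : g (pe.symm (p 1 * p 10)) = g 1 * g 10 := by
  rw [show p 1 * p 10 = p 7 from by decide, pesymm]; exact (gm_1_10).symm
lemma key_1_11 : g (pe.symm (p 1 * p 11)) = g 1 * g 11 := by
  rw [show p 1 * p 11 = p 5 from by decide, pesymm]; exact (gm_1_11).symm
lemma key_2_0 : g (pe.symm (p 2 * p 0)) = g 2 * g 0 := by
  rw [show p 2 * p 0 = p 2 from by decide, pesymm]; exact (gm_2_0).symm
lemma key_2_1 : g (pe.symm (p 2 * p 1)) = g 2 * g 1 := by
  rw [show p 2 * p 1 = p 3 from by decide, pesymm]; exact (gm_2_1).symm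
lemma key_2_2 : g (pe.symm (p 2 * p 2)) = g 2 * g 2 := by
  rw [show p 2 * p 2 = p 0 from by decide, pesymm]; exact (gm_2_2).symm
lemma key_2_3 : g (pe.symm (p 2 * p 3)) = g 2 * g 3 := by
  rw [show p 2 * p 3 = p 1 from by decide, pesymm]; exact (gm_2_3).symm
lemma key_2_4 : g (pe.symm (p 2 * p 4)) = g 2 * g 4 := by
  rw [show p 2 * p 4 = p 10 from by decide, pesymm]; exact (gm_2_4).symm
lemma key_2_5 : g (pe.symm (p 2 * p 5)) = g 2 * g 5 := by
  rw [show p 2 * p 5 = p 6 from by decide, pesymm]; exact (gm_2_5).symm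
lemma key_2_6 : g (pe.symm (p 2 * p 6)) = g 2 * g 6 := by
  rw [show p 2 * p 6 = p 5 from by decide, pesymm]; exact (gm_2_6).symm
lemma key_2_7 : g (pe.symm (p 2 * p 7)) = g 2 * g 7 := by
  rw [show p 2 * p 7 = p 9 from by decide, pesymm]; exact (gm_2_7).symm
lemma key_2_8 : g (pe.symm (p 2 * p 8)) = g 2 * g 8 := by
  rw [show p 2 * p 8 = p 11 from by decide, pesymm]; exact (gm_2_8).symm
lemma key_2_9 : g (pe.symm (p 2 * p 9)) = g 2 * g 9 := by
  rw [show p 2 * p 9 = p 7 from by decide, pesymm]; exact (gm_2_9).symm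
lemma key_2_10 : g (pe.symm (p 2 * p 10)) = g 2 * g 10 := by
  rw [show p 2 * p 10 = p 4 from by decide, pesymm]; exact (gm_2_10).symm
lemma key_2_11 : g (pe.symm (p 2 * p 11)) = g 2 * g 11 := by
  rw [show p 2 * p 11 = p 8 from by decide, pesymm]; exact (gm_2_11).symm
lemma key_3_0 : g (pe.symm (p 3 * p 0)) = g 3 * g 0 := by
  rw [show p 3 * p 0 = p 3 from by decide, pesymm]; exact (gm_3_0).symm
lemma key_3_1 : g (pe.symm (p 3 * p 1)) = g 3 * g 1 := by
  rw [show p 3 * p 1 = p 2 from by decide, pesymm]; exact (gm_3_1).symm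
lemma key_3_2 : g (pe.symm (p 3 * p 2)) = g 3 * g 2 := by
  rw [show p 3 * p 2 = p 1 from by decide, pesymm]; exact (gm_3_2).symm
lemma key_3_3 : g (pe.symm (p 3 * p 3)) = g 3 * g 3 := by
  rw [show p 3 * p 3 = p 0 from by decide, pesymm]; exact (gm_3_3).symm
lemma key_3_4 : g (pe.symm (p 3 * p 4)) = g 3 * g 4 := by
  rw [show p 3 * p 4 = p 7 from by decide, pesymm]; exact (gm_3_4).symm
lemma key_3_5 : g (pe.symm (p 3 * p 5)) = g 3 * g 5 := by
  rw [show p 3 * p 5 = p 8 from by decide, pesymm]; exact (gm_3_5).symm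
lemma key_3_6 : g (pe.symm (p 3 * p 6)) = g 3 * g 6 := by
  rw [show p 3 * p 6 = p 11 from by decide, pesymm]; exact (gm_3_6).symm
lemma key_3_7 : g (pe.symm (p 3 * p 7)) = g 3 * g 7 := by
  rw [show p 3 * p 7 = p 4 from by decide, pesymm]; exact (gm_3_7).symm
lemma key_3_8 : g (pe.symm (p 3 * p 8)) = g 3 * g 8 := by
  rw [show p 3 * p 8 = p 5 from by decide, pesymm]; exact (gm_3_8).symm
lemma key_3_9 : g (pe.symm (p 3 * p 9)) = g 3 * g 9 := by
  rw [show p 3 * p 9 = p 10 from by decide, pesymm]; exact (gm_3_9).symm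
lemma key_3_10 : g (pe.symm (p 3 * p 10)) = g 3 * g 10 := by
  rw [show p 3 * p 10 = p 9 from by decide, pesymm]; exact (gm_3_10).symm
lemma key_3_11 : g (pe.symm (p 3 * p 11)) = g 3 * g 11 := by
  rw [show p 3 * p 11 = p 6 from by decide, pesymm]; exact (gm_3_11).symm
lemma key_4_0 : g (pe.symm (p 4 * p 0)) = g 4 * g 0 := by
  rw [show p 4 * p 0 = p 4 from by decide, pesymm]; exact (gm_4_0).symm
lemma key_4_1 : g (pe.symm (p 4 * p 1)) = g 4 * g 1 := by
  rw [show p 4 * p 1 = p 10 from by decide, pesymm]; exact (gm_4_1).symm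
lemma key_4_2 : g (pe.symm (p 4 * p 2)) = g 4 * g 2 := by
  rw [show p 4 * p 2 = p 7 from by decide, pesymm]; exact (gm_4_2).symm
lemma key_4_3 : g (pe.symm (p 4 * p 3)) = g 4 * g 3 := by
  rw [show p 4 * p 3 = p 9 from by decide, pesymm]; exact (gm_4_3).symm
lemma key_4_4 : g (pe.symm (p 4 * p 4)) = g 4 * g 4 := by
  rw [show p 4 * p 4 = p 11 from by decide, pesymm]; exact (gm_4_4).symm
lemma key_4_5 : g (pe.symm (p 4 * p 5)) = g 4 * g 5 := by
  rw [show p 4 * p 5 = p 2 from by decide, pesymm]; exact (gm_4_5).symm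
lemma key_4_6 : g (pe.symm (p 4 * p 6)) = g 4 * g 6 := by
  rw [show p 4 * p 6 = p 1 from by decide, pesymm]; exact (gm_4_6).symm
lemma key_4_7 : g (pe.symm (p 4 * p 7)) = g 4 * g 7 := by
  rw [show p 4 * p 7 = p 5 from by decide, pesymm]; exact (gm_4_7).symm
lemma key_4_8 : g (pe.symm (p 4 * p 8)) = g 4 * g 8 := by
  rw [show p 4 * p 8 = p 3 from by decide, pesymm]; exact (gm_4_8).symm
lemma key_4_9 : g (pe.symm (p 4 * p 9)) = g 4 * g 9 := by
  rw [show p 4 * p 9 = p 8 from by decide, pesymm]; exact (gm_4_9).symm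
lemma key_4_10 : g (pe.symm (p 4 * p 10)) = g 4 * g 10 := by
  rw [show p 4 * p 10 = p 6 from by decide, pesymm]; exact (gm_4_10).symm
lemma key_4_11 : g (pe.symm (p 4 * p 11)) = g 4 * g 11 := by
  rw [show p 4 * p 11 = p 0 from by decide, pesymm]; exact (gm_4_11).symm
lemma key_5_0 : g (pe.symm (p 5 * p 0)) = g 5 * g 0 := by
  rw [show p 5 * p 0 = p 5 from by decide, pesymm]; exact (gm_5_0).symm
lemma key_5_1 : g (pe.symm (p 5 * p 1)) = g 5 * g 1 := by
  rw [show p 5 * p 1 = p 8 from by decide, pesymm]; exact (gm_5_1).symm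
lemma key_5_2 : g (pe.symm (p 5 * p 2)) = g 5 * g 2 := by
  rw [show p 5 * p 2 = p 11 from by decide, pesymm]; exact (gm_5_2).symm
lemma key_5_3 : g (pe.symm (p 5 * p 3)) = g 5 * g 3 := by
  rw [show p 5 * p 3 = p 6 from by decide, pesymm]; exact (gm_5_3).symm
lemma key_5_4 : g (pe.symm (p 5 * p 4)) = g 5 * g 4 := by
  rw [show p 5 * p 4 = p 1 from by decide, pesymm]; exact (gm_5_4).symm
lemma key_5_5 : g (pe.symm (p 5 * p 5)) = g 5 * g 5 := by
  rw [show p 5 * p 5 = p 10 from by decide, pesymm]; exact (gm_5_5).symm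
lemma key_5_6 : g (pe.symm (p 5 * p 6)) = g 5 * g 6 := by
  rw [show p 5 * p 6 = p 7 from by decide, pesymm]; exact (gm_5_6).symm
lemma key_5_7 : g (pe.symm (p 5 * p 7)) = g 5 * g 7 := by
  rw [show p 5 * p 7 = p 3 from by decide, pesymm]; exact (gm_5_7).symm
lemma key_5_8 : g (pe.symm (p 5 * p 8)) = g 5 * g 8 := by
  rw [show p 5 * p 8 = p 4 from by decide, pesymm]; exact (gm_5_8).symm
lemma key_5_9 : g (pe.symm (p 5 * p 9)) = g 5 * g 9 := by
  rw [show p 5 * p 9 = p 2 from by decide, pesymm]; exact (gm_5_9).symm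
lemma key_5_10 : g (pe.symm (p 5 * p 10)) = g 5 * g 10 := by
  rw [show p 5 * p 10 = p 0 from by decide, pesymm]; exact (gm_5_10).symm
lemma key_5_11 : g (pe.symm (p 5 * p 11)) = g 5 * g 11 := by
  rw [show p 5 * p 11 = p 9 from by decide, pesymm]; exact (gm_5_11).symm
lemma key_6_0 : g (pe.symm (p 6 * p 0)) = g 6 * g 0 := by
  rw [show p 6 * p 0 = p 6 from by decide, pesymm]; exact (gm_6_0).symm
lemma key_6_1 : g (pe.symm (p 6 * p 1)) = g 6 * g 1 := by
  rw [show p 6 * p 1 = p 11 from by decide, pesymm]; exact (gm_6_1).symm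
lemma key_6_2 : g (pe.symm (p 6 * p 2)) = g 6 * g 2 := by
  rw [show p 6 * p 2 = p 8 from by decide, pesymm]; exact (gm_6_2).symm
lemma key_6_3 : g (pe.symm (p 6 * p 3)) = g 6 * g 3 := by
  rw [show p 6 * p 3 = p 5 from by decide, pesymm]; exact (gm_6_3).symm
lemma key_6_4 : g (pe.symm (p 6 * p 4)) = g 6 * g 4 := by
  rw [show p 6 * p 4 = p 3 from by decide, pesymm]; exact (gm_6_4).symm
lemma key_6_5 : g (pe.symm (p 6 * p 5)) = g 6 * g 5 := by
  rw [show p 6 * p 5 = p 4 from by decide, pesymm]; exact (gm_6_5).symm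
lemma key_6_6 : g (pe.symm (p 6 * p 6)) = g 6 * g 6 := by
  rw [show p 6 * p 6 = p 9 from by decide, pesymm]; exact (gm_6_6).symm
lemma key_6_7 : g (pe.symm (p 6 * p 7)) = g 6 * g 7 := by
  rw [show p 6 * p 7 = p 1 from by decide, pesymm]; exact (gm_6_7).symm
lemma key_6_8 : g (pe.symm (p 6 * p 8)) = g 6 * g 8 := by
  rw [show p 6 * p 8 = p 10 from by decide, pesymm]; exact (gm_6_8).symm
lemma key_6_9 : g (pe.symm (p 6 * p 9)) = g 6 * g 9 := by
  rw [show p 6 * p 9 = p 0 from by decide, pesymm]; exact (gm_6_9).symm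
lemma key_6_10 : g (pe.symm (p 6 * p 10)) = g 6 * g 10 := by
  rw [show p 6 * p 10 = p 2 from by decide, pesymm]; exact (gm_6_10).symm
lemma key_6_11 : g (pe.symm (p 6 * p 11)) = g 6 * g 11 := by
  rw [show p 6 * p 11 = p 7 from by decide, pesymm]; exact (gm_6_11).symm
lemma key_7_0 : g (pe.symm (p 7 * p 0)) = g 7 * g 0 := by
  rw [show p 7 * p 0 = p 7 from by decide, pesymm]; exact (gm_7_0).symm
lemma key_7_1 : g (pe.symm (p 7 * p 1)) = g 7 * g 1 := by
  rw [show p 7 * p 1 = p 9 from by decide, pesymm]; exact (gm_7_1).symm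
lemma key_7_2 : g (pe.symm (p 7 * p 2)) = g 7 * g 2 := by
  rw [show p 7 * p 2 = p 4 from by decide, pesymm]; exact (gm_7_2).symm
lemma key_7_3 : g (pe.symm (p 7 * p 3)) = g 7 * g 3 := by
  rw [show p 7 * p 3 = p 10 from by decide, pesymm]; exact (gm_7_3).symm
lemma key_7_4 : g (pe.symm (p 7 * p 4)) = g 7 * g 4 := by
  rw [show p 7 * p 4 = p 6 from by decide, pesymm]; exact (gm_7_4).symm
lemma key_7_5 : g (pe.symm (p 7 * p 5)) = g 7 * g 5 := by
  rw [show p 7 * p 5 = p 1 from by decide, pesymm]; exact (gm_7_5).symm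
lemma key_7_6 : g (pe.symm (p 7 * p 6)) = g 7 * g 6 := by
  rw [show p 7 * p 6 = p 2 from by decide, pesymm]; exact (gm_7_6).symm
lemma key_7_7 : g (pe.symm (p 7 * p 7)) = g 7 * g 7 := by
  rw [show p 7 * p 7 = p 8 from by decide, pesymm]; exact (gm_7_7).symm
lemma key_7_8 : g (pe.symm (p 7 * p 8)) = g 7 * g 8 := by
  rw [show p 7 * p 8 = p 0 from by decide, pesymm]; exact (gm_7_8).symm
lemma key_7_9 : g (pe.symm (p 7 * p 9)) = g 7 * g 9 := by
  rw [show p 7 * p 9 = p 5 from by decide, pesymm]; exact (gm_7_9).symm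
lemma key_7_10 : g (pe.symm (p 7 * p 10)) = g 7 * g 10 := by
  rw [show p 7 * p 10 = p 11 from by decide, pesymm]; exact (gm_7_10).symm
lemma key_7_11 : g (pe.symm (p 7 * p 11)) = g 7 * g 11 := by
  rw [show p 7 * p 11 = p 3 from by decide, pesymm]; exact (gm_7_11).symm
lemma key_8_0 : g (pe.symm (p 8 * p 0)) = g 8 * g 0 := by
  rw [show p 8 * p 0 = p 8 from by decide, pesymm]; exact (gm_8_0).symm
lemma key_8_1 : g (pe.symm (p 8 * p 1)) = g 8 * g 1 := by
  rw [show p 8 * p 1 = p 5 from by decide, pesymm]; exact (gm_8_1).symm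
lemma key_8_2 : g (pe.symm (p 8 * p 2)) = g 8 * g 2 := by
  rw [show p 8 * p 2 = p 6 from by decide, pesymm]; exact (gm_8_2).symm
lemma key_8_3 : g (pe.symm (p 8 * p 3)) = g 8 * g 3 := by
  rw [show p 8 * p 3 = p 11 from by decide, pesymm]; exact (gm_8_3).symm
lemma key_8_4 : g (pe.symm (p 8 * p 4)) = g 8 * g 4 := by
  rw [show p 8 * p 4 = p 2 from by decide, pesymm]; exact (gm_8_4).symm
lemma key_8_5 : g (pe.symm (p 8 * p 5)) = g 8 * g 5 := by
  rw [show p 8 * p 5 = p 9 from by decide, pesymm]; exact (gm_8_5).symm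
lemma key_8_6 : g (pe.symm (p 8 * p 6)) = g 8 * g 6 := by
  rw [show p 8 * p 6 = p 4 from by decide, pesymm]; exact (gm_8_6).symm
lemma key_8_7 : g (pe.symm (p 8 * p 7)) = g 8 * g 7 := by
  rw [show p 8 * p 7 = p 0 from by decide, pesymm]; exact (gm_8_7).symm
lemma key_8_8 : g (pe.symm (p 8 * p 8)) = g 8 * g 8 := by
  rw [show p 8 * p 8 = p 7 from by decide, pesymm]; exact (gm_8_8).symm
lemma key_8_9 : g (pe.symm (p 8 * p 9)) = g 8 * g 9 := by
  rw [show p 8 * p 9 = p 1 from by decide, pesymm]; exact (gm_8_9).symm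
lemma key_8_10 : g (pe.symm (p 8 * p 10)) = g 8 * g 10 := by
  rw [show p 8 * p 10 = p 3 from by decide, pesymm]; exact (gm_8_10).symm
lemma key_8_11 : g (pe.symm (p 8 * p 11)) = g 8 * g 11 := by
  rw [show p 8 * p 11 = p 10 from by decide, pesymm]; exact (gm_8_11).symm
lemma key_9_0 : g (pe.symm (p 9 * p 0)) = g 9 * g 0 := by
  rw [show p 9 * p 0 = p 9 from by decide, pesymm]; exact (gm_9_0).symm
lemma key_9_1 : g (pe.symm (p 9 * p 1)) = g 9 * g 1 := by
  rw [show p 9 * p 1 = p 7 from by decide, pesymm]; exact (gm_9_1).symm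
lemma key_9_2 : g (pe.symm (p 9 * p 2)) = g 9 * g 2 := by
  rw [show p 9 * p 2 = p 10 from by decide, pesymm]; exact (gm_9_2).symm
lemma key_9_3 : g (pe.symm (p 9 * p 3)) = g 9 * g 3 := by
  rw [show p 9 * p 3 = p 4 from by decide, pesymm]; exact (gm_9_3).symm
lemma key_9_4 : g (pe.symm (p 9 * p 4)) = g 9 * g 4 := by
  rw [show p 9 * p 4 = p 5 from by decide, pesymm]; exact (gm_9_4).symm
lemma key_9_5 : g (pe.symm (p 9 * p 5)) = g 9 * g 5 := by
  rw [show p 9 * p 5 = p 3 from by decide, pesymm]; exact (gm_9_5).symm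
lemma key_9_6 : g (pe.symm (p 9 * p 6)) = g 9 * g 6 := by
  rw [show p 9 * p 6 = p 0 from by decide, pesymm]; exact (gm_9_6).symm
lemma key_9_7 : g (pe.symm (p 9 * p 7)) = g 9 * g 7 := by
  rw [show p 9 * p 7 = p 11 from by decide, pesymm]; exact (gm_9_7).symm
lemma key_9_8 : g (pe.symm (p 9 * p 8)) = g 9 * g 8 := by
  rw [show p 9 * p 8 = p 2 from by decide, pesymm]; exact (gm_9_8).symm
lemma key_9_9 : g (pe.symm (p 9 * p 9)) = g 9 * g 9 := by
  rw [show p 9 * p 9 = p 6 from by decide, pesymm]; exact (gm_9_9).symm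
lemma key_9_10 : g (pe.symm (p 9 * p 10)) = g 9 * g 10 := by
  rw [show p 9 * p 10 = p 8 from by decide, pesymm]; exact (gm_9_10).symm
lemma key_9_11 : g (pe.symm (p 9 * p 11)) = g 9 * g 11 := by
  rw [show p 9 * p 11 = p 1 from by decide, pesymm]; exact (gm_9_11).symm
lemma key_10_0 : g (pe.symm (p 10 * p 0)) = g 10 * g 0 := by
  rw [show p 10 * p 0 = p 10 from by decide, pesymm]; exact (gm_10_0).symm
lemma key_10_1 : g (pe.symm (p 10 * p 1)) = g 10 * g 1 := by
  rw [show p 10 * p 1 = p 4 from by decide, pesymm]; exact (gm_10_1).symm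
lemma key_10_2 : g (pe.symm (p 10 * p 2)) = g 10 * g 2 := by
  rw [show p 10 * p 2 = p 9 from by decide, pesymm]; exact (gm_10_2).symm
lemma key_10_3 : g (pe.symm (p 10 * p 3)) = g 10 * g 3 := by
  rw [show p 10 * p 3 = p 7 from by decide, pesymm]; exact (gm_10_3).symm
lemma key_10_4 : g (pe.symm (p 10 * p 4)) = g 10 * g 4 := by
  rw [show p 10 * p 4 = p 8 from by decide, pesymm]; exact (gm_10_4).symm
lemma key_10_5 : g (pe.symm (p 10 * p 5)) = g 10 * g 5 := by
  rw [show p 10 * p 5 = p 0 from by decide, pesymm]; exact (gm_10_5).symm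
lemma key_10_6 : g (pe.symm (p 10 * p 6)) = g 10 * g 6 := by
  rw [show p 10 * p 6 = p 3 from by decide, pesymm]; exact (gm_10_6).symm
lemma key_10_7 : g (pe.symm (p 10 * p 7)) = g 10 * g 7 := by
  rw [show p 10 * p 7 = p 6 from by decide, pesymm]; exact (gm_10_7).symm
lemma key_10_8 : g (pe.symm (p 10 * p 8)) = g 10 * g 8 := by
  rw [show p 10 * p 8 = p 1 from by decide, pesymm]; exact (gm_10_8).symm
lemma key_10_9 : g (pe.symm (p 10 * p 9)) = g 10 * g 9 := by
  rw [show p 10 * p 9 = p 11 from by decide, pesymm]; exact (gm_10_9).symm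
lemma key_10_10 : g (pe.symm (p 10 * p 10)) = g 10 * g 10 := by
  rw [show p 10 * p 10 = p 5 from by decide, pesymm]; exact (gm_10_10).symm
lemma key_10_11 : g (pe.symm (p 10 * p 11)) = g 10 * g 11 := by
  rw [show p 10 * p 11 = p 2 from by decide, pesymm]; exact (gm_10_11).symm
lemma key_11_0 : g (pe.symm (p 11 * p 0)) = g 11 * g 0 := by
  rw [show p 11 * p 0 = p 11 from by decide, pesymm]; exact (gm_11_0).symm
lemma key_11_1 : g (pe.symm (p 11 * p 1)) = g 11 * g 1 := by
  rw [show p 11 * p 1 = p 6 from by decide, pesymm]; exact (gm_11_1).symm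
lemma key_11_2 : g (pe.symm (p 11 * p 2)) = g 11 * g 2 := by
  rw [show p 11 * p 2 = p 5 from by decide, pesymm]; exact (gm_11_2).symm
lemma key_11_3 : g (pe.symm (p 11 * p 3)) = g 11 * g 3 := by
  rw [show p 11 * p 3 = p 8 from by decide, pesymm]; exact (gm_11_3).symm
lemma key_11_4 : g (pe.symm (p 11 * p 4)) = g 11 * g 4 := by
  rw [show p 11 * p 4 = p 0 from by decide, pesymm]; exact (gm_11_4).symm
lemma key_11_5 : g (pe.symm (p 11 * p 5)) = g 11 * g 5 := by
  rw [show p 11 * p 5 = p 7 from by decide, pesymm]; exact (gm_11_5).symm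
lemma key_11_6 : g (pe.symm (p 11 * p 6)) = g 11 * g 6 := by
  rw [show p 11 * p 6 = p 10 from by decide, pesymm]; exact (gm_11_6).symm
lemma key_11_7 : g (pe.symm (p 11 * p 7)) = g 11 * g 7 := by
  rw [show p 11 * p 7 = p 2 from by decide, pesymm]; exact (gm_11_7).symm
lemma key_11_8 : g (pe.symm (p 11 * p 8)) = g 11 * g 8 := by
  rw [show p 11 * p 8 = p 9 from by decide, pesymm]; exact (gm_11_8).symm
lemma key_11_9 : g (pe.symm (p 11 * p 9)) = g 11 * g 9 := by
  rw [show p 11 * p 9 = p 3 from by decide, pesymm]; exact (gm_11_9).symm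
lemma key_11_10 : g (pe.symm (p 11 * p 10)) = g 11 * g 10 := by
  rw [show p 11 * p 10 = p 1 from by decide, pesymm]; exact (gm_11_10).symm
lemma key_11_11 : g (pe.symm (p 11 * p 11)) = g 11 * g 11 := by
  rw [show p 11 * p 11 = p 4 from by decide, pesymm]; exact (gm_11_11).symm

lemma key : ∀ i j : Fin 12, g (pe.symm (p i * p j)) = g i * g j := by
  intro i j
  fin_cases i <;> fin_cases j
  · exact key_0_0
  · exact key_0_1
  · exact key_0_2
  · exact key_0_3
  · exact key_0_4
  · exact key_0_5
  · exact key_0_6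
  · exact key_0_7
  · exact key_0_8
  · exact key_0_9
  · exact key_0_10
  · exact key_0_11
  · exact key_1_0
  · exact key_1_1
  · exact key_1_2
  · exact key_1_3
  · exact key_1_4
  · exact key_1_5
  · exact key_1_6
  · exact key_1_7
  · exact key_1_8
  · exact key_1_9
  · exact key_1_10
  · exact key_1_11
  · exact key_2_0
  · exact key_2_1
  · exact key_2_2
  · exact key_2_3
  · exact key_2_4
  · exact key_2_5
  · exact key_2_6
  · exact key_2_7
  · exact key_2_8
  · exact key_2_9
  · exact key_2_10
  · exact key_2_11
  · exact key_3_0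
  · exact key_3_1
  · exact key_3_2
  · exact key_3_3
  · exact key_3_4
  · exact key_3_5
  · exact key_3_6
  · exact key_3_7
  · exact key_3_8
  · exact key_3_9
  · exact key_3_10
  · exact key_3_11
  · exact key_4_0
  · exact key_4_1
  · exact key_4_2
  · exact key_4_3
  · exact key_4_4
  · exact key_4_5
  · exact key_4_6
  · exact key_4_7
  · exact key_4_8
  · exact key_4_9
  · exact key_4_10
  · exact key_4_11
  · exact key_5_0
  · exact key_5_1
  · exact key_5_2
  · exact key_5_3
  · exact key_5_4
  · exact key_5_5
  · exact key_5_6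
  · exact key_5_7
  · exact key_5_8
  · exact key_5_9
  · exact key_5_10
  · exact key_5_11
  · exact key_6_0
  · exact key_6_1
  · exact key_6_2
  · exact key_6_3
  · exact key_6_4
  · exact key_6_5
  · exact key_6_6
  · exact key_6_7
  · exact key_6_8
  · exact key_6_9
  · exact key_6_10
  · exact key_6_11
  · exact key_7_0
  · exact key_7_1
  · exact key_7_2
  · exact key_7_3
  · exact key_7_4
  · exact key_7_5
  · exact key_7_6
  · exact key_7_7
  · exact key_7_8
  · exact key_7_9
  · exact key_7_10
  · exact key_7_11
  · exact key_8_0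
  · exact key_8_1
  · exact key_8_2
  · exact key_8_3
  · exact key_8_4
  · exact key_8_5
  · exact key_8_6
  · exact key_8_7
  · exact key_8_8
  · exact key_8_9
  · exact key_8_10
  · exact key_8_11
  · exact key_9_0
  · exact key_9_1
  · exact key_9_2
  · exact key_9_3
  · exact key_9_4
  · exact key_9_5
  · exact key_9_6
  · exact key_9_7
  · exact key_9_8
  · exact key_9_9
  · exact key_9_10
  · exact key_9_11
  · exact key_10_0
  · exact key_10_1
  · exact key_10_2
  · exact key_10_3
  · exact key_10_4
  · exact key_10_5
  · exact key_10_6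
  · exact key_10_7
  · exact key_10_8
  · exact key_10_9
  · exact key_10_10
  · exact key_10_11
  · exact key_11_0
  · exact key_11_1
  · exact key_11_2
  · exact key_11_3
  · exact key_11_4
  · exact key_11_5
  · exact key_11_6
  · exact key_11_7
  · exact key_11_8
  · exact key_11_9
  · exact key_11_10
  · exact key_11_11

lemma nc_1 : q1 ∉ Subgroup.center SL2 := by
  intro h
  obtain ⟨r, -, hs⟩ := Matrix.SpecialLinearGroup.mem_center_iff.mp h
  have h1 := congrFun (congrFun hs 0) 0
  have h2 := congrFun (congrFun hs 1) 1
  simp only [q1, Matrix.scalar_apply, Matrix.diagonal_apply, if_pos rfl] at h1 h2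
  rw [h1] at h2
  norm_num [Complex.ext_iff] at h2

lemma nc_2 : q2 ∉ Subgroup.center SL2 := by
  intro h
  obtain ⟨r, -, hs⟩ := Matrix.SpecialLinearGroup.mem_center_iff.mp h
  have h1 := congrFun (congrFun hs 0) 1
  norm_num [q2, Matrix.scalar_apply, Matrix.diagonal_apply, Complex.ext_iff] at h1

lemma nc_3 : q3 ∉ Subgroup.center SL2 := by
  intro h
  obtain ⟨r, -, hs⟩ := Matrix.SpecialLinearGroup.mem_center_iff.mp h
  have h1 := congrFun (congrFun hs 0) 1
  norm_num [q3, Matrix.scalar_apply, Matrix.diagonal_apply, Complex.ext_iff] at h1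

lemma nc_4 : q4 ∉ Subgroup.center SL2 := by
  intro h
  obtain ⟨r, -, hs⟩ := Matrix.SpecialLinearGroup.mem_center_iff.mp h
  have h1 := congrFun (congrFun hs 0) 1
  norm_num [q4, Matrix.scalar_apply, Matrix.diagonal_apply, Complex.ext_iff] at h1

lemma nc_5 : q5 ∉ Subgroup.center SL2 := by
  intro h
  obtain ⟨r, -, hs⟩ := Matrix.SpecialLinearGroup.mem_center_iff.mp h
  have h1 := congrFun (congrFun hs 0) 1
  norm_num [q5, Matrix.scalar_apply, Matrix.diagonal_apply, Complex.ext_iff] at h1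

lemma nc_6 : q6 ∉ Subgroup.center SL2 := by
  intro h
  obtain ⟨r, -, hs⟩ := Matrix.SpecialLinearGroup.mem_center_iff.mp h
  have h1 := congrFun (congrFun hs 0) 1
  norm_num [q6, Matrix.scalar_apply, Matrix.diagonal_apply, Complex.ext_iff] at h1

lemma nc_7 : q7 ∉ Subgroup.center SL2 := by
  intro h
  obtain ⟨r, -, hs⟩ := Matrix.SpecialLinearGroup.mem_center_iff.mp h
  have h1 := congrFun (congrFun hs 0) 1
  norm_num [q7, Matrix.scalar_apply, Matrix.diagonal_apply, Complex.ext_iff] at h1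

lemma nc_8 : q8 ∉ Subgroup.center SL2 := by
  intro h
  obtain ⟨r, -, hs⟩ := Matrix.SpecialLinearGroup.mem_center_iff.mp h
  have h1 := congrFun (congrFun hs 0) 1
  norm_num [q8, Matrix.scalar_apply, Matrix.diagonal_apply, Complex.ext_iff] at h1

lemma nc_9 : q9 ∉ Subgroup.center SL2 := by
  intro h
  obtain ⟨r, -, hs⟩ := Matrix.SpecialLinearGroup.mem_center_iff.mp h
  have h1 := congrFun (congrFun hs 0) 1
  norm_num [q9, Matrix.scalar_apply, Matrix.diagonal_apply, Complex.ext_iff] at h1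

lemma nc_10 : q10 ∉ Subgroup.center SL2 := by
  intro h
  obtain ⟨r, -, hs⟩ := Matrix.SpecialLinearGroup.mem_center_iff.mp h
  have h1 := congrFun (congrFun hs 0) 1
  norm_num [q10, Matrix.scalar_apply, Matrix.diagonal_apply, Complex.ext_iff] at h1

lemma nc_11 : q11 ∉ Subgroup.center SL2 := by
  intro h
  obtain ⟨r, -, hs⟩ := Matrix.SpecialLinearGroup.mem_center_iff.mp h
  have h1 := congrFun (congrFun hs 0) 1
  norm_num [q11, Matrix.scalar_apply, Matrix.diagonal_apply, Complex.ext_iff] at h1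

lemma gone : ∀ i : Fin 12, g i = 1 → i = 0 := by
  intro i
  fin_cases i
  · intro _; rfl
  · intro h; exact absurd ((QuotientGroup.eq_one_iff (q1)).mp h) nc_1
  · intro h; exact absurd ((QuotientGroup.eq_one_iff (q2)).mp h) nc_2
  · intro h; exact absurd ((QuotientGroup.eq_one_iff (q3)).mp h) nc_3
  · intro h; exact absurd ((QuotientGroup.eq_one_iff (q4)).mp h) nc_4
  · intro h; exact absurd ((QuotientGroup.eq_one_iff (q5)).mp h) nc_5
  · intro h; exact absurd ((QuotientGroup.eq_one_iff (q6)).mp h) nc_6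
  · intro h; exact absurd ((QuotientGroup.eq_one_iff (q7)).mp h) nc_7
  · intro h; exact absurd ((QuotientGroup.eq_one_iff (q8)).mp h) nc_8
  · intro h; exact absurd ((QuotientGroup.eq_one_iff (q9)).mp h) nc_9
  · intro h; exact absurd ((QuotientGroup.eq_one_iff (q10)).mp h) nc_10
  · intro h; exact absurd ((QuotientGroup.eq_one_iff (q11)).mp h) nc_11

noncomputable def φ : A4 →* Q2 := MonoidHom.mk' (fun σ => g (pe.symm σ)) (by
  intro a b
  obtain ⟨i, rfl⟩ := pe.surjective a
  obtain ⟨j, rfl⟩ := pe.surjective b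
  show g (pe.symm (pe i * pe j)) = g (pe.symm (pe i)) * g (pe.symm (pe j))
  rw [Equiv.symm_apply_apply, Equiv.symm_apply_apply]
  exact key i j)

lemma φinj : Function.Injective φ := by
  rw [injective_iff_map_eq_one]
  intro σ h
  have h2 : pe.symm σ = 0 := gone _ h
  have h3 : σ = pe 0 := by rw [← h2, Equiv.apply_symm_apply]
  rw [h3]
  show p 0 = 1
  decide

lemma hAval : (!![-I / (1 - I), I / (1 - I); 1 / (1 - I), 1 / (1 - I)] :
    Matrix (Fin 2) (Fin 2) ℂ) = q10.1 := by
  have h1 : (1:ℂ) - I ≠ 0 := by norm_num [Complex.ext_iff]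
  simp only [q10]
  ext a b
  fin_cases a <;> fin_cases b <;> field_simp <;> norm_num [Complex.ext_iff, Complex.div_re, Complex.div_im, Complex.normSq_apply]

noncomputable def A' : SL2 :=
  ⟨!![-I / (1 - I), I / (1 - I); 1 / (1 - I), 1 / (1 - I)], by rw [hAval]; exact q10.2⟩

noncomputable def B' : SL2 := ⟨!![I, 0; 0, -I], by norm_num [Matrix.det_fin_two_of, Complex.ext_iff]⟩

lemma hA : mkQ A' = g 10 := mk_eq_pos (x := A') (y := q10) hAval

lemma hB : mkQ B' = g 1 :=
  mk_eq_pos (x := B') (y := q1) (by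
    norm_num [B', q1, Matrix.ext_iff, Fin.forall_fin_two, Complex.ext_iff])

lemma hmem : ∀ i : Fin 12, g i ∈ Subgroup.closure ({g 10, g 1} : Set Q2) := by
  intro i
  have h10 : g 10 ∈ Subgroup.closure ({g 10, g 1} : Set Q2) :=
    Subgroup.subset_closure (Set.mem_insert _ _)
  have h1 : g 1 ∈ Subgroup.closure ({g 10, g 1} : Set Q2) :=
    Subgroup.subset_closure (Set.mem_insert_of_mem _ rfl)
  have h7 : g 7 ∈ Subgroup.closure ({g 10, g 1} : Set Q2) := gm_1_10 ▸ mul_mem h1 h10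
  have h0 : g 0 ∈ Subgroup.closure ({g 10, g 1} : Set Q2) := gm_1_1 ▸ mul_mem h1 h1
  have h5 : g 5 ∈ Subgroup.closure ({g 10, g 1} : Set Q2) := gm_10_10 ▸ mul_mem h10 h10
  have h4 : g 4 ∈ Subgroup.closure ({g 10, g 1} : Set Q2) := gm_10_1 ▸ mul_mem h10 h1
  have h6 : g 6 ∈ Subgroup.closure ({g 10, g 1} : Set Q2) := gm_4_10 ▸ mul_mem h4 h10
  have h8 : g 8 ∈ Subgroup.closure ({g 10, g 1} : Set Q2) := gm_5_1 ▸ mul_mem h5 h1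
  have h11 : g 11 ∈ Subgroup.closure ({g 10, g 1} : Set Q2) := gm_7_10 ▸ mul_mem h7 h10
  have h9 : g 9 ∈ Subgroup.closure ({g 10, g 1} : Set Q2) := gm_7_1 ▸ mul_mem h7 h1
  have h2 : g 2 ∈ Subgroup.closure ({g 10, g 1} : Set Q2) := gm_6_10 ▸ mul_mem h6 h10
  have h3 : g 3 ∈ Subgroup.closure ({g 10, g 1} : Set Q2) := gm_8_10 ▸ mul_mem h8 h10
  fin_cases i
  · exact h0
  · exact h1
  · exact h2
  · exact h3
  · exact h4
  · exact h5
  · exact h6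
  · exact h7
  · exact h8
  · exact h9
  · exact h10
  · exact h11

theorem main : Nonempty ((Subgroup.closure {mkQ A', mkQ B'} : Subgroup Q2) ≃* A4) := by
  have hset : ({mkQ A', mkQ B'} : Set Q2) = {g 10, g 1} := by rw [hA, hB]
  have hrange : φ.range = Subgroup.closure ({mkQ A', mkQ B'} : Set Q2) := by
    rw [hset]
    apply le_antisymm
    · intro x hx
      obtain ⟨σ, rfl⟩ := MonoidHom.mem_range.mp hx
      exact hmem (pe.symm σ)
    · rw [Subgroup.closure_le]
      intro x hx
      simp only [Set.mem_insert_iff, Set.mem_singleton_iff] at hx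
      rcases hx with rfl | rfl
      · exact MonoidHom.mem_range.mpr ⟨pe 10, by
          show g (pe.symm (pe 10)) = g 10
          rw [Equiv.symm_apply_apply]⟩
      · exact MonoidHom.mem_range.mpr ⟨pe 1, by
          show g (pe.symm (pe 1)) = g 1
          rw [Equiv.symm_apply_apply]⟩
  exact ⟨(MulEquiv.subgroupCongr hrange.symm).trans (MonoidHom.ofInjective φinj).symm⟩

end OrigamiA4Aux

open OrigamiA4Aux in
theorem origami_A4_moebius :
    Nonempty
      ((Subgroup.closure
        { QuotientGroup.mk (s := Subgroup.center (Matrix.SpecialLinearGroup (Fin 2) ℂ))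
            ⟨!![-I / (1 - I), I / (1 - I); 1 / (1 - I), 1 / (1 - I)], by
              have h : (1 : ℂ) - I ≠ 0 := by
                intro h
                have := congrArg Complex.im h
                simp at this
              rw [Matrix.det_fin_two_of]
              field_simp
              ring_nf
              simp only [show (I : ℂ) ^ 3 = -I by rw [pow_succ, Complex.I_sq]; ring,
                show (I : ℂ) ^ 2 = -1 from Complex.I_sq,
                show (I : ℂ) ^ 4 = 1 by rw [show (4 : ℕ) = 2 * 2 from rfl, pow_mul, Complex.I_sq]; ring]
              ring⟩,
          QuotientGroup.mk (s := Subgroup.center (Matrix.SpecialLinearGroup (Fin 2) ℂ))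
            ⟨!![I, 0; 0, -I], by simp [Matrix.det_fin_two_of, mul_neg, Complex.I_mul_I]⟩ } :
          Subgroup (Matrix.SpecialLinearGroup (Fin 2) ℂ ⧸
            Subgroup.center (Matrix.SpecialLinearGroup (Fin 2) ℂ)))
        ≃* alternatingGroup (Fin 4)) := by
  exact main
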